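/- arXiv:0802.2475 — 5 statements merged into one kernel-verified Lean document; each statement's English description precedes it below -/
import Mathlib

section
/- If f(z) = ∫₀¹ dμ(t)/(1-tz) for a probability measure μ on [0,1], then for all γ ≤ 1 and 0 < y₁ ≤ y₂, Re( f(γ+iy₁)/f(γ+iy₂) ) ≥ 1. -/
open MeasureTheory Complex

set_option maxHeartbeats 1000000

lemma key_real (a b t s y₁ y₂ : ℝ) (ha : 0 ≤ a) (hb : 0 ≤ b) (ht : 0 ≤ t) (hs : 0 ≤ s)
    (hy₁ : 0 < y₁) (hy : y₁ ≤ y₂) :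
    0 ≤ (a*b + t*s*(y₁*y₂)) * ((b^2+s^2*y₁^2)*(a^2+t^2*y₂^2) + (a^2+t^2*y₁^2)*(b^2+s^2*y₂^2))
      - 2*(a*b + t*s*(y₂*y₂)) * ((a^2+t^2*y₁^2)*(b^2+s^2*y₁^2)) := by
  have hd : 0 ≤ y₂ - y₁ := by linarith
  have h1 : 0 ≤ y₁ := hy₁.le
  have e : (a*b + t*s*(y₁*y₂)) * ((b^2+s^2*y₁^2)*(a^2+t^2*y₂^2) + (a^2+t^2*y₁^2)*(b^2+s^2*y₂^2))
      - 2*(a*b + t*s*(y₂*y₂)) * ((a^2+t^2*y₁^2)*(b^2+s^2*y₁^2))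
      = (y₂-y₁) * (2*y₁*(t^3*s^3*y₁^4 + 2*a*b*t^2*s^2*y₁^2 + a*b*(b*t-a*s)^2 + a^2*b^2*(t*s)))
        + (y₂-y₁)^2 * (4*t^3*s^3*y₁^4 + 2*a*b*t^2*s^2*y₁^2 + (t*s)*y₁^2*(b^2*t^2+a^2*s^2)
            + a*b*(b*t-a*s)^2)
        + (y₂-y₁)^3 * ((t*s)*(2*t^2*s^2*y₁^3 + y₁*(b^2*t^2+a^2*s^2))) := by ring
  rw [e]
  have hts : 0 ≤ t*s := mul_nonneg ht hs
  have hab : 0 ≤ a*b := mul_nonneg ha hb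
  have c1 : 0 ≤ 2*y₁*(t^3*s^3*y₁^4 + 2*a*b*t^2*s^2*y₁^2 + a*b*(b*t-a*s)^2 + a^2*b^2*(t*s)) := by
    have := mul_nonneg (mul_nonneg (pow_nonneg ht 3) (pow_nonneg hs 3)) (pow_nonneg h1 4)
    have := mul_nonneg hab (mul_nonneg (sq_nonneg t) (sq_nonneg (s*y₁)))
    have := mul_nonneg hab (sq_nonneg (b*t-a*s))
    have := mul_nonneg (mul_nonneg (sq_nonneg a) (sq_nonneg b)) hts
    nlinarith [sq_nonneg (t*s*y₁)]
  have c2 : 0 ≤ 4*t^3*s^3*y₁^4 + 2*a*b*t^2*s^2*y₁^2 + (t*s)*y₁^2*(b^2*t^2+a^2*s^2)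
      + a*b*(b*t-a*s)^2 := by
    have := mul_nonneg (mul_nonneg (pow_nonneg ht 3) (pow_nonneg hs 3)) (pow_nonneg h1 4)
    have := mul_nonneg hab (mul_nonneg (sq_nonneg t) (sq_nonneg (s*y₁)))
    have := mul_nonneg hab (sq_nonneg (b*t-a*s))
    have := mul_nonneg hts (mul_nonneg (sq_nonneg y₁)
      (add_nonneg (mul_nonneg (sq_nonneg b) (sq_nonneg t)) (mul_nonneg (sq_nonneg a) (sq_nonneg s))))
    nlinarith
  have c3 : 0 ≤ (t*s)*(2*t^2*s^2*y₁^3 + y₁*(b^2*t^2+a^2*s^2)) := by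
    refine mul_nonneg hts (add_nonneg ?_ (mul_nonneg h1 (add_nonneg
      (mul_nonneg (sq_nonneg b) (sq_nonneg t)) (mul_nonneg (sq_nonneg a) (sq_nonneg s)))))
    have := mul_nonneg (mul_nonneg (sq_nonneg t) (sq_nonneg s)) (pow_nonneg h1 3)
    nlinarith
  have hd2 : 0 ≤ (y₂-y₁)^2 := sq_nonneg _
  have hd3 : 0 ≤ (y₂-y₁)^3 := pow_nonneg hd 3
  have := mul_nonneg hd c1
  have := mul_nonneg hd2 c2
  have := mul_nonneg hd3 c3
  linarith

lemma re_inv_mul_conj_inv (w v : ℂ) :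
    ((w⁻¹) * (starRingEnd ℂ) (v⁻¹)).re
      = (w.re*v.re + w.im*v.im) / (Complex.normSq w * Complex.normSq v) := by
  rw [map_inv₀, ← mul_inv, Complex.inv_re, Complex.normSq_mul, Complex.normSq_conj,
    Complex.mul_re, Complex.conj_re, Complex.conj_im]
  ring_nf

lemma w_re (γ y t : ℝ) : (1 - (t:ℂ)*((γ:ℂ)+(y:ℂ)*I)).re = 1 - t*γ := by simp
lemma w_im (γ y t : ℝ) : (1 - (t:ℂ)*((γ:ℂ)+(y:ℂ)*I)).im = -(t*y) := by simp
lemma w_normSq (γ y t : ℝ) :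
    Complex.normSq (1 - (t:ℂ)*((γ:ℂ)+(y:ℂ)*I)) = (1-t*γ)^2 + t^2*y^2 := by
  rw [Complex.normSq_apply, w_re, w_im]; ring

lemma w_ne (γ y t : ℝ) (hy : 0 < y) : (1 - (t:ℂ)*((γ:ℂ)+(y:ℂ)*I)) ≠ 0 := by
  intro h
  have him := congrArg Complex.im h
  rw [w_im] at him
  simp only [Complex.zero_im] at him
  have ht : t = 0 := by
    rcases mul_eq_zero.mp (by linarith : t*y = 0) with h'|h'
    · exact h'
    · exact absurd h' hy.ne'
  have hre := congrArg Complex.re h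
  rw [w_re, ht] at hre
  simp at hre

lemma w_normSq_pos (γ y t : ℝ) (hy : 0 < y) : 0 < (1-t*γ)^2 + t^2*y^2 := by
  rcases eq_or_ne t 0 with rfl | ht
  · norm_num
  · have : 0 < t^2*y^2 := by positivity
    nlinarith [sq_nonneg (1-t*γ)]

lemma key_div (a b t s y₁ y₂ : ℝ) (ha : 0 ≤ a) (hb : 0 ≤ b) (ht : 0 ≤ t) (hs : 0 ≤ s)
    (hy₁ : 0 < y₁) (hy : y₁ ≤ y₂)
    (d1t : 0 < a^2+t^2*y₁^2) (d1s : 0 < b^2+s^2*y₁^2)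
    (d2t : 0 < a^2+t^2*y₂^2) (d2s : 0 < b^2+s^2*y₂^2) :
    0 ≤ (a*b + -(t*y₁) * -(s*y₂)) / ((a^2+t^2*y₁^2) * (b^2+s^2*y₂^2))
        - (a*b + -(t*y₂) * -(s*y₂)) / ((a^2+t^2*y₂^2) * (b^2+s^2*y₂^2))
      + ((b*a + -(s*y₁) * -(t*y₂)) / ((b^2+s^2*y₁^2) * (a^2+t^2*y₂^2))
        - (b*a + -(s*y₂) * -(t*y₂)) / ((b^2+s^2*y₂^2) * (a^2+t^2*y₂^2))) := by
  have hN := key_real a b t s y₁ y₂ ha hb ht hs hy₁ hy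
  have hprod : (0:ℝ) < (a^2+t^2*y₁^2)*(b^2+s^2*y₁^2)*((a^2+t^2*y₂^2)*(b^2+s^2*y₂^2)) :=
    mul_pos (mul_pos d1t d1s) (mul_pos d2t d2s)
  have e : (a*b + -(t*y₁) * -(s*y₂)) / ((a^2+t^2*y₁^2) * (b^2+s^2*y₂^2))
        - (a*b + -(t*y₂) * -(s*y₂)) / ((a^2+t^2*y₂^2) * (b^2+s^2*y₂^2))
      + ((b*a + -(s*y₁) * -(t*y₂)) / ((b^2+s^2*y₁^2) * (a^2+t^2*y₂^2))
        - (b*a + -(s*y₂) * -(t*y₂)) / ((b^2+s^2*y₂^2) * (a^2+t^2*y₂^2)))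
      = ((a*b + t*s*(y₁*y₂)) * ((b^2+s^2*y₁^2)*(a^2+t^2*y₂^2) + (a^2+t^2*y₁^2)*(b^2+s^2*y₂^2))
        - 2*(a*b + t*s*(y₂*y₂)) * ((a^2+t^2*y₁^2)*(b^2+s^2*y₁^2)))
        / ((a^2+t^2*y₁^2)*(b^2+s^2*y₁^2)*((a^2+t^2*y₂^2)*(b^2+s^2*y₂^2))) := by
    have h1 := d1t.ne'; have h2 := d1s.ne'; have h3 := d2t.ne'; have h4 := d2s.ne'
    rw [div_sub_div _ _ (mul_ne_zero h1 h4) (mul_ne_zero h3 h4),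
      div_sub_div _ _ (mul_ne_zero h2 h3) (mul_ne_zero h4 h3),
      div_add_div _ _ (mul_ne_zero (mul_ne_zero h1 h4) (mul_ne_zero h3 h4))
        (mul_ne_zero (mul_ne_zero h2 h3) (mul_ne_zero h4 h3)),
      div_eq_div_iff (mul_ne_zero (mul_ne_zero (mul_ne_zero h1 h4) (mul_ne_zero h3 h4))
        (mul_ne_zero (mul_ne_zero h2 h3) (mul_ne_zero h4 h3))) hprod.ne']
    ring
  rw [e]
  exact div_nonneg hN hprod.le

lemma pointwise (γ y₁ y₂ t s : ℝ) (hγ : γ ≤ 1) (hy₁ : 0 < y₁) (hy : y₁ ≤ y₂)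
    (ht : t ∈ Set.Icc (0:ℝ) 1) (hs : s ∈ Set.Icc (0:ℝ) 1) :
    0 ≤ (((1 - (t:ℂ)*((γ:ℂ)+(y₁:ℂ)*I))⁻¹ - (1 - (t:ℂ)*((γ:ℂ)+(y₂:ℂ)*I))⁻¹)
          * (starRingEnd ℂ) ((1 - (s:ℂ)*((γ:ℂ)+(y₂:ℂ)*I))⁻¹)).re
      + (((1 - (s:ℂ)*((γ:ℂ)+(y₁:ℂ)*I))⁻¹ - (1 - (s:ℂ)*((γ:ℂ)+(y₂:ℂ)*I))⁻¹)
          * (starRingEnd ℂ) ((1 - (t:ℂ)*((γ:ℂ)+(y₂:ℂ)*I))⁻¹)).re := by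
  have hy₂ : 0 < y₂ := lt_of_lt_of_le hy₁ hy
  have ha : (0:ℝ) ≤ 1 - t*γ := by nlinarith [ht.1, ht.2, mul_le_mul_of_nonneg_left hγ ht.1]
  have hb : (0:ℝ) ≤ 1 - s*γ := by nlinarith [hs.1, hs.2, mul_le_mul_of_nonneg_left hγ hs.1]
  simp only [sub_mul, Complex.sub_re]
  simp only [re_inv_mul_conj_inv, w_re, w_im, w_normSq]
  exact key_div (1-t*γ) (1-s*γ) t s y₁ y₂ ha hb ht.1 hs.1 hy₁ hy
    (w_normSq_pos γ y₁ t hy₁) (w_normSq_pos γ y₁ s hy₁)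
    (w_normSq_pos γ y₂ t hy₂) (w_normSq_pos γ y₂ s hy₂)

theorem stmt0 (μ : Measure ℝ) [IsProbabilityMeasure μ]
    (hμ : μ (Set.Icc (0:ℝ) 1)ᶜ = 0)
    (f : ℂ → ℂ) (hf : ∀ z : ℂ, f z = ∫ t, (1 - (t:ℂ) * z)⁻¹ ∂μ)
    (γ : ℝ) (hγ : γ ≤ 1) (y₁ y₂ : ℝ) (hy₁ : 0 < y₁) (hy : y₁ ≤ y₂) :
    1 ≤ ((f ((γ:ℂ) + y₁ * Complex.I)) / (f ((γ:ℂ) + y₂ * Complex.I))).re := by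
  have hy₂ : 0 < y₂ := lt_of_lt_of_le hy₁ hy
  set z₁ : ℂ := (γ:ℂ) + y₁ * I with hz₁
  set z₂ : ℂ := (γ:ℂ) + y₂ * I with hz₂
  set g₁ : ℝ → ℂ := fun t => (1 - (t:ℂ) * z₁)⁻¹ with hg₁def
  set g₂ : ℝ → ℂ := fun t => (1 - (t:ℂ) * z₂)⁻¹ with hg₂def
  have hae : ∀ᵐ x ∂μ, x ∈ Set.Icc (0:ℝ) 1 := by
    rw [ae_iff]; exact hμ
  have hres : μ.restrict (Set.Icc 0 1) = μ := Measure.restrict_eq_self_of_ae_mem hae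
  haveI hFMC : IsFiniteMeasureOnCompacts μ := ⟨fun K _ => measure_lt_top μ K⟩
  have hint : ∀ h : ℝ → ℂ, Continuous h → Integrable h μ := by
    intro h hc
    have h2 := ContinuousOn.integrableOn_compact (μ := μ) isCompact_Icc
      (hc.continuousOn (s := Set.Icc (0:ℝ) 1))
    rw [← hres]
    exact h2
  have hc₁ : Continuous g₁ := by
    apply Continuous.inv₀
    · exact continuous_const.sub (Complex.continuous_ofReal.mul continuous_const)
    · intro t; exact w_ne γ y₁ t hy₁
  have hc₂ : Continuous g₂ := by
    apply Continuous.inv₀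
    · exact continuous_const.sub (Complex.continuous_ofReal.mul continuous_const)
    · intro t; exact w_ne γ y₂ t hy₂
  have hI1 : Integrable g₁ μ := hint g₁ hc₁
  have hI2 : Integrable g₂ μ := hint g₂ hc₂
  have hcc : Continuous (fun s : ℝ => (starRingEnd ℂ) (g₂ s)) :=
    Complex.continuous_conj.comp hc₂
  have hI2c : Integrable (fun s => (starRingEnd ℂ) (g₂ s)) μ := hint _ hcc
  have hfz₁ : f z₁ = ∫ t, g₁ t ∂μ := hf z₁
  have hfz₂ : f z₂ = ∫ t, g₂ t ∂μ := hf z₂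
  -- re and im of f z₂
  have hI2re : Integrable (fun t => (g₂ t).re) μ := by
    simpa only [RCLike.re_to_complex] using hI2.re
  have hI2im : Integrable (fun t => (g₂ t).im) μ := by
    simpa only [RCLike.im_to_complex] using hI2.im
  have hre2 : (f z₂).re = ∫ t, (g₂ t).re ∂μ := by
    have := integral_re hI2
    simp only [RCLike.re_to_complex] at this
    rw [hfz₂, ← this]
  have him2 : (f z₂).im = ∫ t, (g₂ t).im ∂μ := by
    have := integral_im hI2
    simp only [RCLike.im_to_complex] at this
    rw [hfz₂, ← this]
  -- lower bound for re + im
  set c : ℝ := min 1 y₂ with hc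
  set M : ℝ := (1+|γ|)^2 + y₂^2 with hM
  have hMpos : 0 < M := by positivity
  have hcpos : 0 < c := lt_min one_pos hy₂
  have hlow : ∀ t ∈ Set.Icc (0:ℝ) 1, c / M ≤ (g₂ t).re + (g₂ t).im := by
    intro t htm
    have hD := w_normSq_pos γ y₂ t hy₂
    have h1 : (g₂ t).re = (1-t*γ) / ((1-t*γ)^2 + t^2*y₂^2) := by
      rw [hg₂def]
      simp only [Complex.inv_re]
      rw [w_re, w_normSq]
    have h2 : (g₂ t).im = (t*y₂) / ((1-t*γ)^2 + t^2*y₂^2) := by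
      rw [hg₂def]
      simp only [Complex.inv_im]
      rw [w_im, w_normSq]
      ring
    rw [h1, h2, ← add_div]
    have htγ : t*γ ≤ t := by nlinarith [htm.1]
    have hnum : c ≤ (1-t*γ) + t*y₂ := by
      rcases le_total 1 y₂ with h | h
      · have hc1 : c = 1 := min_eq_left h
        nlinarith [htm.1, htm.2]
      · have hc1 : c = y₂ := min_eq_right h
        nlinarith [htm.1, htm.2]
    have hden : (1-t*γ)^2 + t^2*y₂^2 ≤ M := by
      have e1 : t*γ ≤ t*|γ| := mul_le_mul_of_nonneg_left (le_abs_self γ) htm.1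
      have e2 : t*(-|γ|) ≤ t*γ := mul_le_mul_of_nonneg_left (neg_abs_le γ) htm.1
      have e3 : t*|γ| ≤ 1*|γ| := mul_le_mul_of_nonneg_right htm.2 (abs_nonneg γ)
      have e4 : t^2 ≤ 1 := by nlinarith [htm.1, htm.2]
      rw [hM]
      nlinarith [abs_nonneg γ, sq_nonneg y₂]
    exact div_le_div₀ (by linarith [hnum]) hnum hD hden
  have hmono : ∫ t, c/M ∂μ ≤ ∫ t, ((g₂ t).re + (g₂ t).im) ∂μ :=
    integral_mono_ae (integrable_const _) (hI2re.add hI2im)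
      (hae.mono fun t htm => hlow t htm)
  have hconstint : ∫ _t : ℝ, c/M ∂μ = c/M := by
    simp [measure_univ]
  have hflow : 0 < (f z₂).re + (f z₂).im := by
    rw [hre2, him2, ← integral_add hI2re hI2im]
    calc (0:ℝ) < c/M := div_pos hcpos hMpos
      _ = ∫ _t : ℝ, c/M ∂μ := hconstint.symm
      _ ≤ _ := hmono
  have hne0 : f z₂ ≠ 0 := by
    intro h
    rw [h] at hflow
    simp at hflow
  have hnormSq : 0 < Complex.normSq (f z₂) := Complex.normSq_pos.mpr hne0
  -- the double-integral nonnegativity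
  set K : ℝ × ℝ → ℝ := fun p => ((g₁ p.1 - g₂ p.1) * (starRingEnd ℂ) (g₂ p.2)).re with hK
  have hprodint : Integrable (fun p : ℝ×ℝ => (g₁ p.1 - g₂ p.1) * (starRingEnd ℂ) (g₂ p.2))
      (μ.prod μ) := (hI1.sub hI2).mul_prod hI2c
  have hKint : Integrable K (μ.prod μ) := by
    simpa only [RCLike.re_to_complex] using hprodint.re
  have hKswapint : Integrable (fun p : ℝ×ℝ => K p.swap) (μ.prod μ) := by
    have h3 := hKint.swap
    exact h3
  have hswapeq : ∫ p, K p.swap ∂(μ.prod μ) = ∫ p, K p ∂(μ.prod μ) := integral_prod_swap K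
  have haeprod : ∀ᵐ p ∂(μ.prod μ), p.1 ∈ Set.Icc (0:ℝ) 1 ∧ p.2 ∈ Set.Icc (0:ℝ) 1 := by
    have hU : (μ.prod μ) (((Set.Icc (0:ℝ) 1)ᶜ ×ˢ (Set.univ : Set ℝ))
        ∪ ((Set.univ : Set ℝ) ×ˢ (Set.Icc (0:ℝ) 1)ᶜ)) = 0 :=
      measure_union_null (by rw [Measure.prod_prod, hμ, zero_mul])
        (by rw [Measure.prod_prod, hμ, mul_zero])
    rw [ae_iff]
    refine measure_mono_null ?_ hU
    intro p hp
    simp only [Set.mem_setOf_eq, not_and_or] at hp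
    rcases hp with h | h
    · exact Or.inl ⟨h, Set.mem_univ _⟩
    · exact Or.inr ⟨Set.mem_univ _, h⟩
  have hsumnn : 0 ≤ ∫ p, (K p + K p.swap) ∂(μ.prod μ) := by
    apply integral_nonneg_of_ae
    filter_upwards [haeprod] with p hp
    have := pointwise γ y₁ y₂ p.1 p.2 hγ hy₁ hy hp.1 hp.2
    simpa only [Pi.zero_apply, Prod.fst_swap, Prod.snd_swap, hK, hg₁def, hg₂def, hz₁, hz₂] using this
  have hKnn : 0 ≤ ∫ p, K p ∂(μ.prod μ) := by
    rw [integral_add hKint hKswapint, hswapeq] at hsumnn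
    linarith
  -- convert to Re((f z₁ - f z₂) * conj (f z₂))
  have hmuleq : (f z₁ - f z₂) * (starRingEnd ℂ) (f z₂)
      = ∫ p : ℝ×ℝ, (g₁ p.1 - g₂ p.1) * (starRingEnd ℂ) (g₂ p.2) ∂(μ.prod μ) := by
    have hpm := integral_prod_mul (μ := μ) (ν := μ) (f := fun t => g₁ t - g₂ t)
      (g := fun s => (starRingEnd ℂ) (g₂ s))
    rw [hfz₁, hfz₂, ← integral_sub hI1 hI2, ← integral_conj, ← hpm]
  have hP : 0 ≤ ((f z₁ - f z₂) * (starRingEnd ℂ) (f z₂)).re := by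
    rw [hmuleq]
    have := integral_re hprodint
    simp only [RCLike.re_to_complex] at this
    rw [← this]
    exact hKnn
  -- finish
  rw [Complex.div_re]
  rw [← add_div, le_div_iff₀ hnormSq, one_mul]
  have hmul : ((f z₁ - f z₂) * (starRingEnd ℂ) (f z₂)).re
      = (f z₁).re*(f z₂).re + (f z₁).im*(f z₂).im
        - ((f z₂).re*(f z₂).re + (f z₂).im*(f z₂).im) := by
    simp only [Complex.mul_re, Complex.sub_re, Complex.sub_im, Complex.conj_re, Complex.conj_im]
    ring
  rw [hmul] at hP
  rw [Complex.normSq_apply]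
  linarith
end

section
/- If f(z) = ∫₀¹ dμ(t)/(1-tz) for a probability measure μ on [0,1] and γ ≤ 1 is fixed, then the function y ↦ |f(γ+iy)| is monotonically decreasing on (0,∞). -/
open MeasureTheory Complex

lemma key_poly (a b t s u v : ℝ) (ha : 0 ≤ a) (hb : 0 ≤ b) (ht : 0 ≤ t) (hs : 0 ≤ s)
    (hu : 0 ≤ u) (huv : u ≤ v)
    (hPu : 0 < (a^2 + t^2*u) * (b^2 + s^2*u)) (hPv : 0 < (a^2 + t^2*v) * (b^2 + s^2*v)) :
    (a*b + t*s*v) / ((a^2 + t^2*v) * (b^2 + s^2*v)) ≤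
      (a*b + t*s*u) / ((a^2 + t^2*u) * (b^2 + s^2*u)) := by
  rw [div_le_div_iff₀ hPv hPu]
  have hv : 0 ≤ v := hu.trans huv
  have h1 : 0 ≤ a^2*s^2 + b^2*t^2 - a*b*t*s := by
    nlinarith [sq_nonneg (a*s - b*t), mul_nonneg (mul_nonneg (mul_nonneg ha hb) ht) hs]
  have hE : 0 ≤ a*b*(a^2*s^2 + b^2*t^2 - a*b*t*s) + a*b*t^2*s^2*(u+v) + t^3*s^3*(u*v) := by
    have h2 : 0 ≤ a*b*(a^2*s^2 + b^2*t^2 - a*b*t*s) :=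
      mul_nonneg (mul_nonneg ha hb) h1
    have h3 : 0 ≤ a*b*t^2*s^2*(u+v) := by positivity
    have h4 : 0 ≤ t^3*s^3*(u*v) := by positivity
    linarith
  nlinarith [mul_nonneg (sub_nonneg.2 huv) hE]

lemma re_prod (γ y t s : ℝ) :
    ((1 - (t:ℂ)*((γ:ℂ) + (y:ℂ)*Complex.I))⁻¹ *
      (starRingEnd ℂ) ((1 - (s:ℂ)*((γ:ℂ) + (y:ℂ)*Complex.I))⁻¹)).re =
      ((1 - t*γ)*(1 - s*γ) + t*s*y^2) /
        (((1 - t*γ)^2 + t^2*y^2) * ((1 - s*γ)^2 + s^2*y^2)) := by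
  rw [map_inv₀, ← mul_inv, Complex.inv_re, Complex.normSq_apply]
  simp only [Complex.mul_re, Complex.mul_im, Complex.sub_re, Complex.sub_im,
    Complex.add_re, Complex.add_im, Complex.one_re, Complex.one_im,
    Complex.ofReal_re, Complex.ofReal_im, Complex.I_re, Complex.I_im,
    Complex.conj_re, Complex.conj_im]
  ring

lemma one_sub_ne (z : ℂ) (hz : z.im ≠ 0) (t : ℝ) : (1:ℂ) - (t:ℂ)*z ≠ 0 := by
  intro h
  have him : ((1:ℂ) - (t:ℂ)*z).im = 0 := by rw [h]; simp
  simp only [Complex.sub_im, Complex.one_im, Complex.mul_im, Complex.ofReal_re,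
    Complex.ofReal_im, zero_mul, add_zero, zero_sub, neg_eq_zero] at him
  have ht : t = 0 := by
    rcases mul_eq_zero.1 him with h' | h'
    · exact h'
    · exact absurd h' hz
  rw [ht] at h
  simp at h

theorem stmt1 (μ : Measure ℝ) [IsProbabilityMeasure μ]
    (hμ : μ (Set.Icc (0:ℝ) 1)ᶜ = 0)
    (f : ℂ → ℂ) (hf : ∀ z : ℂ, f z = ∫ t, (1 - (t:ℂ) * z)⁻¹ ∂μ)
    (γ : ℝ) (hγ : γ ≤ 1) :
    AntitoneOn (fun y : ℝ => ‖f ((γ:ℂ) + y * Complex.I)‖) (Set.Ioi 0) := by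
  -- a.e. membership facts
  have hae : ∀ᵐ t ∂μ, t ∈ Set.Icc (0:ℝ) 1 := by
    rw [ae_iff]
    simpa [Set.compl_def] using hμ
  have haeP : ∀ᵐ p ∂(μ.prod μ), p.1 ∈ Set.Icc (0:ℝ) 1 ∧ p.2 ∈ Set.Icc (0:ℝ) 1 := by
    have h1 : (μ.prod μ) ((Set.Icc (0:ℝ) 1)ᶜ ×ˢ (Set.univ : Set ℝ)) = 0 := by
      rw [Measure.prod_prod, hμ, zero_mul]
    have h2 : (μ.prod μ) ((Set.univ : Set ℝ) ×ˢ (Set.Icc (0:ℝ) 1)ᶜ) = 0 := by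
      rw [Measure.prod_prod, hμ, mul_zero]
    have ha : ∀ᵐ p ∂(μ.prod μ), p.1 ∈ Set.Icc (0:ℝ) 1 := by
      rw [ae_iff]
      refine measure_mono_null (fun p hp => ?_) h1
      exact ⟨hp, trivial⟩
    have hb : ∀ᵐ p ∂(μ.prod μ), p.2 ∈ Set.Icc (0:ℝ) 1 := by
      rw [ae_iff]
      refine measure_mono_null (fun p hp => ?_) h2
      exact ⟨trivial, hp⟩
    exact ha.and hb
  -- the integrand family
  set g : ℝ → ℝ → ℂ := fun y t => (1 - (t:ℂ)*((γ:ℂ) + (y:ℂ)*Complex.I))⁻¹ with hg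
  have him : ∀ y : ℝ, 0 < y → ((γ:ℂ) + (y:ℂ)*Complex.I).im ≠ 0 := by
    intro y hy
    simp [Complex.add_im, Complex.mul_im]
    exact ne_of_gt hy
  have hcont : ∀ y : ℝ, 0 < y → Continuous (g y) := by
    intro y hy
    refine Continuous.inv₀ (by fun_prop) (fun t => one_sub_ne _ (him y hy) t)
  -- integrability of products on μ.prod μ
  have hGint : ∀ y : ℝ, 0 < y →
      Integrable (fun p : ℝ × ℝ => g y p.1 * (starRingEnd ℂ) (g y p.2)) (μ.prod μ) := by
    intro y hy
    have hc := hcont y hy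
    obtain ⟨C, hC⟩ := (isCompact_Icc (a := (0:ℝ)) (b := 1)).exists_bound_of_continuousOn
      hc.continuousOn
    have hmeas : AEStronglyMeasurable (fun p : ℝ × ℝ => g y p.1 * (starRingEnd ℂ) (g y p.2))
        (μ.prod μ) := by
      exact ((hc.comp continuous_fst).mul
        (Complex.continuous_conj.comp (hc.comp continuous_snd))).aestronglyMeasurable
    refine Integrable.mono' (integrable_const (C*C)) hmeas ?_
    filter_upwards [haeP] with p hp
    have h1 := hC p.1 hp.1
    have h2 := hC p.2 hp.2
    have h2' : ‖(starRingEnd ℂ) (g y p.2)‖ ≤ C := by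
      rwa [RCLike.norm_conj]
    calc ‖g y p.1 * (starRingEnd ℂ) (g y p.2)‖
        = ‖g y p.1‖ * ‖(starRingEnd ℂ) (g y p.2)‖ := norm_mul _ _
      _ ≤ C * C := mul_le_mul h1 h2' (norm_nonneg _) ((norm_nonneg _).trans h1)
  -- normSq of f as a double integral
  have key : ∀ y : ℝ, 0 < y →
      Complex.normSq (f ((γ:ℂ) + (y:ℝ) * Complex.I)) =
        ∫ p : ℝ × ℝ, (g y p.1 * (starRingEnd ℂ) (g y p.2)).re ∂(μ.prod μ) := by
    intro y hy
    have hprod : ((f ((γ:ℂ) + (y:ℝ) * Complex.I)) *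
        (starRingEnd ℂ) (f ((γ:ℂ) + (y:ℝ) * Complex.I))) =
        ∫ p : ℝ × ℝ, g y p.1 * (starRingEnd ℂ) (g y p.2) ∂(μ.prod μ) := by
      rw [hf, ← integral_conj, ← integral_prod_mul]
    have := congrArg Complex.re hprod
    rw [Complex.mul_conj] at this
    rw [Complex.ofReal_re] at this
    rw [this]
    simpa using (integral_re (hGint y hy)).symm
  -- main antitone argument
  intro y1 hy1 y2 hy2 h12
  simp only [Set.mem_Ioi] at hy1 hy2
  simp only
  rw [Complex.norm_def, Complex.norm_def]
  apply Real.sqrt_le_sqrt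
  rw [key y1 hy1, key y2 hy2]
  apply integral_mono_ae ((hGint y2 hy2).re) ((hGint y1 hy1).re)
  filter_upwards [haeP] with p hp
  obtain ⟨⟨ht0, ht1⟩, ⟨hs0, hs1⟩⟩ := hp
  set t := p.1
  set s := p.2
  simp only [hg, RCLike.re_to_complex]
  rw [re_prod, re_prod]
  have ha : 0 ≤ 1 - t*γ := by nlinarith
  have hb : 0 ≤ 1 - s*γ := by nlinarith
  have hden : ∀ (r y : ℝ), 0 ≤ r → 0 < y → 0 < (1 - r*γ)^2 + r^2*y^2 := by
    intro r y hr hy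
    rcases eq_or_lt_of_le hr with h | h
    · rw [← h]; norm_num
    · have : 0 < r^2*y^2 := by positivity
      nlinarith [sq_nonneg (1 - r*γ)]
  exact key_poly (1 - t*γ) (1 - s*γ) t s (y1^2) (y2^2) ha hb ht0 hs0 (by positivity)
    (by nlinarith) (mul_pos (hden t y1 ht0 hy1) (hden s y1 hs0 hy1))
    (mul_pos (hden t y2 ht0 hy2) (hden s y2 hs0 hy2))
end

section
/- If f, g ∈ 𝒯, then Re( (f*g)(iy) / f(iy) ) ≥ 1 for all y > 0. -/
open MeasureTheory Complex


-- helper: continuous functions are integrable wrt prob measure supported on Icc 0 1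
lemma cont_integrable {E : Type*} [NormedAddCommGroup E] {μ : Measure ℝ} [IsProbabilityMeasure μ]
    (hμ : μ (Set.Icc (0:ℝ) 1)ᶜ = 0) {g : ℝ → E} (hg : Continuous g) : Integrable g μ := by
  have hae : ∀ᵐ x ∂μ, x ∈ Set.Icc (0:ℝ) 1 := by
    have : {x : ℝ | ¬ x ∈ Set.Icc (0:ℝ) 1} = (Set.Icc (0:ℝ) 1)ᶜ := rfl
    rw [MeasureTheory.ae_iff, this, hμ]
  rw [← Measure.restrict_eq_self_of_ae_mem hae]
  exact hg.continuousOn.integrableOn_compact isCompact_Icc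

lemma ae_mem_Icc {μ : Measure ℝ} (hμ : μ (Set.Icc (0:ℝ) 1)ᶜ = 0) :
    ∀ᵐ x ∂μ, x ∈ Set.Icc (0:ℝ) 1 := by
  have : {x : ℝ | ¬ x ∈ Set.Icc (0:ℝ) 1} = (Set.Icc (0:ℝ) 1)ᶜ := rfl
  rw [MeasureTheory.ae_iff, this, hμ]

-- transfer for polynomials
lemma poly_transfer (μ ν ρ : Measure ℝ)
    [IsProbabilityMeasure μ] [IsProbabilityMeasure ν] [IsProbabilityMeasure ρ]
    (hμ : μ (Set.Icc (0:ℝ) 1)ᶜ = 0) (hν : ν (Set.Icc (0:ℝ) 1)ᶜ = 0)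
    (hρ : ρ (Set.Icc (0:ℝ) 1)ᶜ = 0)
    (hmom : ∀ k : ℕ, (∫ t, t ^ k ∂ρ) = (∫ t, t ^ k ∂μ) * (∫ t, t ^ k ∂ν))
    (p : Polynomial ℝ) :
    ∫ x, p.eval x ∂ρ = ∫ s, ∫ t, p.eval (s * t) ∂ν ∂μ := by
  have hinner : ∀ s : ℝ, ∫ t, p.eval (s * t) ∂ν
      = ∑ k ∈ Finset.range (p.natDegree + 1), p.coeff k * s ^ k * (∫ t, t ^ k ∂ν) := by
    intro s
    have : ∀ t : ℝ, p.eval (s * t) = ∑ k ∈ Finset.range (p.natDegree + 1),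
        (p.coeff k * s ^ k) * t ^ k := by
      intro t
      rw [Polynomial.eval_eq_sum_range]
      exact Finset.sum_congr rfl (fun k _ => by ring)
    simp_rw [this]
    rw [integral_finset_sum]
    · exact Finset.sum_congr rfl (fun k _ => by
        rw [integral_const_mul])
    · intro k _
      exact (cont_integrable hν (by continuity)).const_mul _
  have hL : ∫ x, p.eval x ∂ρ
      = ∑ k ∈ Finset.range (p.natDegree + 1), p.coeff k * (∫ x, x ^ k ∂ρ) := by
    have : ∀ x : ℝ, p.eval x = ∑ k ∈ Finset.range (p.natDegree + 1), p.coeff k * x ^ k := by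
      intro x; rw [Polynomial.eval_eq_sum_range]
    simp_rw [this]
    rw [integral_finset_sum]
    · exact Finset.sum_congr rfl (fun k _ => by rw [integral_const_mul])
    · intro k _
      exact (cont_integrable hρ (by continuity)).const_mul _
  have hR : ∫ s, ∫ t, p.eval (s * t) ∂ν ∂μ
      = ∑ k ∈ Finset.range (p.natDegree + 1),
        p.coeff k * ((∫ s, s ^ k ∂μ) * (∫ t, t ^ k ∂ν)) := by
    simp_rw [hinner]
    rw [integral_finset_sum]
    · refine Finset.sum_congr rfl (fun k _ => ?_)
      rw [integral_mul_const, integral_const_mul, mul_assoc]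
    · intro k _
      exact ((cont_integrable hμ (by continuity)).const_mul _).mul_const _
  rw [hL, hR]
  exact Finset.sum_congr rfl (fun k _ => by rw [hmom k])

lemma transfer (μ ν ρ : Measure ℝ)
    [IsProbabilityMeasure μ] [IsProbabilityMeasure ν] [IsProbabilityMeasure ρ]
    (hμ : μ (Set.Icc (0:ℝ) 1)ᶜ = 0) (hν : ν (Set.Icc (0:ℝ) 1)ᶜ = 0)
    (hρ : ρ (Set.Icc (0:ℝ) 1)ᶜ = 0)
    (hmom : ∀ k : ℕ, (∫ t, t ^ k ∂ρ) = (∫ t, t ^ k ∂μ) * (∫ t, t ^ k ∂ν))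
    (h : ℝ → ℝ) (hc : Continuous h) (hb : ∀ x, |h x| ≤ 1) :
    ∫ x, h x ∂ρ = ∫ s, ∫ t, h (s * t) ∂ν ∂μ := by
  apply eq_of_forall_dist_le
  intro ε hε
  obtain ⟨p, hp⟩ := exists_polynomial_near_of_continuousOn 0 1 h hc.continuousOn (ε/2)
    (by positivity)
  -- the inner functions
  set gh : ℝ → ℝ := fun s => ∫ t, h (s * t) ∂ν with hgh
  set gp : ℝ → ℝ := fun s => ∫ t, p.eval (s * t) ∂ν with hgp
  have hmulcont : Continuous (fun q : ℝ × ℝ => q.1 * q.2) := continuous_fst.mul continuous_snd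
  have hghm : AEStronglyMeasurable gh μ :=
    ((hc.comp hmulcont).stronglyMeasurable.integral_prod_right').aestronglyMeasurable
  have hgpm : AEStronglyMeasurable gp μ :=
    (((p.continuous.comp hmulcont)).stronglyMeasurable.integral_prod_right').aestronglyMeasurable
  have hgh_int : Integrable gh μ := by
    refine Integrable.mono' (integrable_const 1) hghm ?_
    filter_upwards with s
    refine (norm_integral_le_of_norm_le_const (C := 1) ?_).trans (by simp)
    filter_upwards with t
    simpa using hb (s * t)
  have hstIcc : ∀ {s t : ℝ}, s ∈ Set.Icc (0:ℝ) 1 → t ∈ Set.Icc (0:ℝ) 1 →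
      s * t ∈ Set.Icc (0:ℝ) 1 := by
    intro s t hs ht
    exact ⟨mul_nonneg hs.1 ht.1, mul_le_one₀ hs.2 ht.1 ht.2⟩
  have hgp_bd : ∀ᵐ s ∂μ, ‖gp s‖ ≤ ε/2 + 1 := by
    filter_upwards [ae_mem_Icc hμ] with s hs
    refine (norm_integral_le_of_norm_le_const (C := ε/2 + 1) ?_).trans (by simp)
    filter_upwards [ae_mem_Icc hν] with t ht
    have h1 := (hp (s * t) (hstIcc hs ht)).le
    have h2 := hb (s * t)
    rw [Real.norm_eq_abs]
    calc |p.eval (s*t)| = |(p.eval (s*t) - h (s*t)) + h (s*t)| := by ring_nf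
      _ ≤ |p.eval (s*t) - h (s*t)| + |h (s*t)| := abs_add_le _ _
      _ ≤ ε/2 + 1 := add_le_add h1 h2
  have hgp_int : Integrable gp μ := by
    refine Integrable.mono' (integrable_const (ε/2+1)) hgpm ?_
    exact hgp_bd
  -- difference bounds
  have hdist1 : ‖(∫ x, h x ∂ρ) - ∫ x, p.eval x ∂ρ‖ ≤ ε/2 := by
    rw [← integral_sub (cont_integrable hρ hc) (cont_integrable hρ p.continuous)]
    refine (norm_integral_le_of_norm_le_const (C := ε/2) ?_).trans (by simp)
    filter_upwards [ae_mem_Icc hρ] with x hx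
    rw [Real.norm_eq_abs, abs_sub_comm]
    exact (hp x hx).le
  have hdist2 : ‖(∫ s, gh s ∂μ) - ∫ s, gp s ∂μ‖ ≤ ε/2 := by
    rw [← integral_sub hgh_int hgp_int]
    refine (norm_integral_le_of_norm_le_const (C := ε/2) ?_).trans (by simp)
    filter_upwards [ae_mem_Icc hμ] with s hs
    have : gh s - gp s = ∫ t, (h (s*t) - p.eval (s*t)) ∂ν := by
      rw [integral_sub]
      · exact cont_integrable hν (hc.comp (continuous_const.mul continuous_id))
      · exact cont_integrable hν (p.continuous.comp (continuous_const.mul continuous_id))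
    rw [this]
    refine (norm_integral_le_of_norm_le_const (C := ε/2) ?_).trans (by simp)
    filter_upwards [ae_mem_Icc hν] with t ht
    rw [Real.norm_eq_abs, abs_sub_comm]
    exact (hp (s*t) (hstIcc hs ht)).le
  have heq := poly_transfer μ ν ρ hμ hν hρ hmom p
  rw [Real.dist_eq]
  calc |(∫ x, h x ∂ρ) - ∫ s, gh s ∂μ|
      = |((∫ x, h x ∂ρ) - ∫ x, p.eval x ∂ρ) + ((∫ s, gp s ∂μ) - ∫ s, gh s ∂μ)| := by
        rw [← heq]; ring_nf
    _ ≤ |(∫ x, h x ∂ρ) - ∫ x, p.eval x ∂ρ| + |(∫ s, gp s ∂μ) - ∫ s, gh s ∂μ| := abs_add_le _ _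
    _ ≤ ε/2 + ε/2 := add_le_add hdist1 (by rw [abs_sub_comm]; exact hdist2)
    _ = ε := by ring

lemma key_pointwise (y s u t : ℝ) (hy : 0 < y)
    (hs : s ∈ Set.Icc (0:ℝ) 1) (hu : u ∈ Set.Icc (0:ℝ) 1) (ht : t ∈ Set.Icc (0:ℝ) 1) :
    0 ≤ (1/(1+(s*t*y)^2) - 1/(1+(s*y)^2)) * (1/(1+(u*y)^2))
      + ((s*t*y)/(1+(s*t*y)^2) - (s*y)/(1+(s*y)^2)) * ((u*y)/(1+(u*y)^2))
      + (1/(1+(u*t*y)^2) - 1/(1+(u*y)^2)) * (1/(1+(s*y)^2))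
      + ((u*t*y)/(1+(u*t*y)^2) - (u*y)/(1+(u*y)^2)) * ((s*y)/(1+(s*y)^2)) := by
  set a := s * y with ha
  set b := u * y with hb
  have ha0 : 0 ≤ a := mul_nonneg hs.1 hy.le
  have hb0 : 0 ≤ b := mul_nonneg hu.1 hy.le
  have ht0 : 0 ≤ t := ht.1
  have ht1 : 0 ≤ 1 - t := by linarith [ht.2]
  have hsty : s*t*y = t*a := by ring
  have huty : u*t*y = t*b := by ring
  rw [hsty, huty]
  have h1 : (0:ℝ) < 1 + a^2 := by positivity
  have h2 : (0:ℝ) < 1 + b^2 := by positivity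
  have h3 : (0:ℝ) < 1 + (t*a)^2 := by positivity
  have h4 : (0:ℝ) < 1 + (t*b)^2 := by positivity
  have hN : (0:ℝ) ≤ (1-t)*((a-b)^2 + t*(a^2+b^2)) + a*b*t*(1-t)^2*(a^2+b^2)
      + 2*a^2*b^2*t^2*(1-t)*(1+t) + 2*a^3*b^3*t^3*(1-t) := by
    have e1 : (0:ℝ) ≤ (1-t)*((a-b)^2 + t*(a^2+b^2)) :=
      mul_nonneg ht1 (by positivity)
    have e2 : (0:ℝ) ≤ a*b*t*(1-t)^2*(a^2+b^2) := by positivity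
    have e3 : (0:ℝ) ≤ 2*a^2*b^2*t^2*(1-t)*(1+t) := by
      have : (0:ℝ) ≤ 1 + t := by linarith
      have := mul_nonneg (mul_nonneg (by positivity : (0:ℝ) ≤ 2*a^2*b^2*t^2) ht1) this
      linarith [this]
    have e4 : (0:ℝ) ≤ 2*a^3*b^3*t^3*(1-t) :=
      mul_nonneg (by positivity) ht1
    linarith
  have hE : (1/(1+(t*a)^2) - 1/(1+a^2)) * (1/(1+b^2))
      + ((t*a)/(1+(t*a)^2) - a/(1+a^2)) * (b/(1+b^2))
      + (1/(1+(t*b)^2) - 1/(1+b^2)) * (1/(1+a^2))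
      + ((t*b)/(1+(t*b)^2) - b/(1+b^2)) * (a/(1+a^2))
      = ((1-t)*((a-b)^2 + t*(a^2+b^2)) + a*b*t*(1-t)^2*(a^2+b^2)
      + 2*a^2*b^2*t^2*(1-t)*(1+t) + 2*a^3*b^3*t^3*(1-t))
        / ((1+a^2) * (1+b^2) * (1+(t*a)^2) * (1+(t*b)^2)) := by
    field_simp
    ring
  rw [hE]
  exact div_nonneg hN (by positivity)

lemma inv_split (y x : ℝ) :
    (1 - (x:ℂ) * ((y:ℂ) * Complex.I))⁻¹
      = ((1/(1+(x*y)^2) : ℝ) : ℂ) + ((x*y/(1+(x*y)^2) : ℝ) : ℂ) * Complex.I := by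
  have hd : ((1:ℂ) + ((x:ℂ)*(y:ℂ))^2) ≠ 0 := by
    have h0 : ((1 + (x*y)^2 : ℝ) : ℂ) ≠ 0 := Complex.ofReal_ne_zero.mpr (by positivity)
    push_cast at h0
    exact h0
  have key : (1 - (x:ℂ) * ((y:ℂ) * Complex.I))
      * (((1/(1+(x*y)^2) : ℝ) : ℂ) + ((x*y/(1+(x*y)^2) : ℝ) : ℂ) * Complex.I) = 1 := by
    push_cast
    field_simp
    ring_nf
    rw [Complex.I_sq]
    ring_nf
    rw [← add_one_mul, add_comm ((x:ℂ)^2*(y:ℂ)^2) 1, mul_inv_cancel₀ (by rw [← mul_pow]; exact hd)]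
  exact inv_eq_of_mul_eq_one_right key


lemma repr_integral (y : ℝ) (hy : 0 < y) (μ : Measure ℝ) [IsProbabilityMeasure μ]
    (hμ : μ (Set.Icc (0:ℝ) 1)ᶜ = 0) :
    (∫ x, (1 - (x:ℂ) * ((y:ℂ) * Complex.I))⁻¹ ∂μ)
      = ((∫ x, 1/(1+(x*y)^2) ∂μ : ℝ) : ℂ) + ((∫ x, x*y/(1+(x*y)^2) ∂μ : ℝ) : ℂ) * Complex.I := by
  have hPc : Continuous (fun x : ℝ => 1/(1+(x*y)^2)) := by
    apply Continuous.div continuous_const (by continuity)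
    intro x; positivity
  have hQc : Continuous (fun x : ℝ => x*y/(1+(x*y)^2)) := by
    apply Continuous.div (by continuity) (by continuity)
    intro x; positivity
  simp_rw [inv_split y]
  have i1 : Integrable (fun x : ℝ => ((1/(1+(x*y)^2) : ℝ) : ℂ)) μ :=
    cont_integrable hμ (by exact Complex.continuous_ofReal.comp hPc)
  have i2 : Integrable (fun x : ℝ => ((x*y/(1+(x*y)^2) : ℝ) : ℂ) * Complex.I) μ :=
    (cont_integrable hμ (by exact Complex.continuous_ofReal.comp hQc)).mul_const _
  rw [integral_add i1 i2,
    integral_mul_const,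
    show (∫ a : ℝ, ((1/(1+(a*y)^2) : ℝ) : ℂ) ∂μ) = ((∫ x, 1/(1+(x*y)^2) ∂μ : ℝ) : ℂ) from
      integral_ofReal,
    show (∫ a : ℝ, ((a*y/(1+(a*y)^2) : ℝ) : ℂ) ∂μ) = ((∫ x, x*y/(1+(x*y)^2) ∂μ : ℝ) : ℂ) from
      integral_ofReal]

-- a.e. membership for product measures
lemma ae_mem_prod {α β : Type*} [MeasurableSpace α] [MeasurableSpace β]
    {μ : Measure α} {ν : Measure β} [SFinite μ] [SFinite ν]
    {s : Set α} {t : Set β} (hs : μ sᶜ = 0) (ht : ν tᶜ = 0) :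
    ∀ᵐ p ∂(μ.prod ν), p.1 ∈ s ∧ p.2 ∈ t := by
  have h1 : (μ.prod ν) {p : α × β | ¬ p.1 ∈ s} = 0 := by
    have : {p : α × β | ¬ p.1 ∈ s} = sᶜ ×ˢ (Set.univ : Set β) := by
      ext p; simp [Set.mem_prod]
    rw [this, Measure.prod_prod, hs, zero_mul]
  have h2 : (μ.prod ν) {p : α × β | ¬ p.2 ∈ t} = 0 := by
    have : {p : α × β | ¬ p.2 ∈ t} = (Set.univ : Set α) ×ˢ tᶜ := by
      ext p; simp [Set.mem_prod]
    rw [this, Measure.prod_prod, ht, mul_zero]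
  have e1 : ∀ᵐ p ∂(μ.prod ν), p.1 ∈ s := by rw [MeasureTheory.ae_iff]; exact h1
  have e2 : ∀ᵐ p ∂(μ.prod ν), p.2 ∈ t := by rw [MeasureTheory.ae_iff]; exact h2
  exact e1.and e2

-- key Fubini / symmetrization inequality
lemma key_integral (μ ν : Measure ℝ)
    [IsProbabilityMeasure μ] [IsProbabilityMeasure ν]
    (hμ : μ (Set.Icc (0:ℝ) 1)ᶜ = 0) (hν : ν (Set.Icc (0:ℝ) 1)ᶜ = 0)
    (P Q : ℝ → ℝ) (hPc : Continuous P) (hQc : Continuous Q)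
    (hPb : ∀ x, |P x| ≤ 1) (hQb : ∀ x, |Q x| ≤ 1)
    (hkey : ∀ s u t : ℝ, s ∈ Set.Icc (0:ℝ) 1 → u ∈ Set.Icc (0:ℝ) 1 → t ∈ Set.Icc (0:ℝ) 1 →
      0 ≤ (P (s*t) - P s) * P u + (Q (s*t) - Q s) * Q u
        + (P (u*t) - P u) * P s + (Q (u*t) - Q u) * Q s) :
    (∫ s, P s ∂μ) * (∫ s, P s ∂μ) + (∫ s, Q s ∂μ) * (∫ s, Q s ∂μ)
      ≤ (∫ s, ∫ t, P (s*t) ∂ν ∂μ) * (∫ s, P s ∂μ)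
        + (∫ s, ∫ t, Q (s*t) ∂ν ∂μ) * (∫ s, Q s ∂μ) := by
  set M : Measure ((ℝ × ℝ) × ℝ) := (μ.prod μ).prod ν with hM
  set K : (ℝ × ℝ) × ℝ → ℝ := fun p =>
    (P (p.1.1 * p.2) - P p.1.1) * P p.1.2 + (Q (p.1.1 * p.2) - Q p.1.1) * Q p.1.2 with hK
  have hKc : Continuous K := by
    apply Continuous.add
    · exact ((hPc.comp ((continuous_fst.comp continuous_fst).mul continuous_snd)).sub
        (hPc.comp (continuous_fst.comp continuous_fst))).mul
        (hPc.comp (continuous_snd.comp continuous_fst))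
    · exact ((hQc.comp ((continuous_fst.comp continuous_fst).mul continuous_snd)).sub
        (hQc.comp (continuous_fst.comp continuous_fst))).mul
        (hQc.comp (continuous_snd.comp continuous_fst))
  have hKb : ∀ p, ‖K p‖ ≤ 4 := by
    intro p
    rw [Real.norm_eq_abs, hK]
    have b1 := hPb (p.1.1 * p.2); have b2 := hPb p.1.1; have b3 := hPb p.1.2
    have b4 := hQb (p.1.1 * p.2); have b5 := hQb p.1.1; have b6 := hQb p.1.2
    have habs : ∀ x y z : ℝ, |x| ≤ 1 → |y| ≤ 1 → |z| ≤ 1 → |(x - y) * z| ≤ 2 := by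
      intro x y z h1 h2 h3
      rw [abs_mul]
      calc |x - y| * |z| ≤ (|x| + |y|) * 1 :=
            mul_le_mul (abs_sub _ _) h3 (abs_nonneg _) (by positivity)
        _ ≤ 2 := by linarith
    calc |(P (p.1.1 * p.2) - P p.1.1) * P p.1.2 + (Q (p.1.1 * p.2) - Q p.1.1) * Q p.1.2|
        ≤ |(P (p.1.1 * p.2) - P p.1.1) * P p.1.2| + |(Q (p.1.1 * p.2) - Q p.1.1) * Q p.1.2| :=
          abs_add_le _ _
      _ ≤ 2 + 2 := add_le_add (habs _ _ _ b1 b2 b3) (habs _ _ _ b4 b5 b6)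
      _ = 4 := by norm_num
  have hKint : Integrable K M := by
    refine Integrable.mono' (integrable_const 4) hKc.aestronglyMeasurable ?_
    filter_upwards with p using hKb p
  set A := ∫ s, P s ∂μ with hA
  set B := ∫ s, Q s ∂μ with hB
  set c : ℝ → ℝ := fun s => ∫ t, P (s*t) ∂ν with hc
  set d : ℝ → ℝ := fun s => ∫ t, Q (s*t) ∂ν with hd
  have hcm : StronglyMeasurable c :=
    (hPc.comp (continuous_fst.mul continuous_snd)).stronglyMeasurable.integral_prod_right'
  have hdm : StronglyMeasurable d :=
    (hQc.comp (continuous_fst.mul continuous_snd)).stronglyMeasurable.integral_prod_right'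
  have hcb : ∀ s, |c s| ≤ 1 := by
    intro s
    rw [← Real.norm_eq_abs]
    refine (norm_integral_le_of_norm_le_const (C := 1) ?_).trans (by simp)
    filter_upwards with t
    simpa using hPb (s * t)
  have hdb : ∀ s, |d s| ≤ 1 := by
    intro s
    rw [← Real.norm_eq_abs]
    refine (norm_integral_le_of_norm_le_const (C := 1) ?_).trans (by simp)
    filter_upwards with t
    simpa using hQb (s * t)
  have hcint : Integrable c μ := by
    refine Integrable.mono' (integrable_const 1) hcm.aestronglyMeasurable ?_
    filter_upwards with s using (Real.norm_eq_abs _) ▸ hcb s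
  have hdint : Integrable d μ := by
    refine Integrable.mono' (integrable_const 1) hdm.aestronglyMeasurable ?_
    filter_upwards with s using (Real.norm_eq_abs _) ▸ hdb s
  -- compute the integral of K
  have hKval : ∫ p, K p ∂M = ((∫ s, c s ∂μ) - A) * A + ((∫ s, d s ∂μ) - B) * B := by
    rw [hM, MeasureTheory.integral_prod _ hKint]
    have hinner : ∀ q : ℝ × ℝ, ∫ t, K (q, t) ∂ν
        = (c q.1 - P q.1) * P q.2 + (d q.1 - Q q.1) * Q q.2 := by
      intro q
      have e : (fun t => K (q, t)) = fun t =>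
          (P (q.1*t) * P q.2 + Q (q.1*t) * Q q.2) - (P q.1 * P q.2 + Q q.1 * Q q.2) := by
        funext t; simp only [hK]; ring
      rw [e]
      have i1 : Integrable (fun t => P (q.1*t) * P q.2) ν :=
        (cont_integrable hν (hPc.comp (continuous_const.mul continuous_id))).mul_const _
      have i2 : Integrable (fun t => Q (q.1*t) * Q q.2) ν :=
        (cont_integrable hν (hQc.comp (continuous_const.mul continuous_id))).mul_const _
      have i12 : Integrable (fun t => P (q.1*t) * P q.2 + Q (q.1*t) * Q q.2) ν := i1.add i2
      rw [integral_sub i12 (integrable_const _), integral_add i1 i2,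
        integral_mul_const, integral_mul_const, integral_const]
      simp [hc, hd]
      ring
    simp_rw [hinner]
    have j1 : Integrable (fun q : ℝ × ℝ => (c q.1 - P q.1) * P q.2) (μ.prod μ) := by
      refine Integrable.mono' (integrable_const 2) ?_ ?_
      · exact (((hcm.comp_measurable measurable_fst).sub
          (hPc.stronglyMeasurable.comp_measurable measurable_fst)).mul
          (hPc.stronglyMeasurable.comp_measurable measurable_snd)).aestronglyMeasurable
      · filter_upwards with q
        rw [Real.norm_eq_abs, abs_mul]
        calc |c q.1 - P q.1| * |P q.2| ≤ (|c q.1| + |P q.1|) * 1 :=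
            mul_le_mul (abs_sub _ _) (hPb _) (abs_nonneg _) (by positivity)
          _ ≤ 2 := by linarith [hcb q.1, hPb q.1]
    have j2 : Integrable (fun q : ℝ × ℝ => (d q.1 - Q q.1) * Q q.2) (μ.prod μ) := by
      refine Integrable.mono' (integrable_const 2) ?_ ?_
      · exact (((hdm.comp_measurable measurable_fst).sub
          (hQc.stronglyMeasurable.comp_measurable measurable_fst)).mul
          (hQc.stronglyMeasurable.comp_measurable measurable_snd)).aestronglyMeasurable
      · filter_upwards with q
        rw [Real.norm_eq_abs, abs_mul]
        calc |d q.1 - Q q.1| * |Q q.2| ≤ (|d q.1| + |Q q.1|) * 1 :=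
            mul_le_mul (abs_sub _ _) (hQb _) (abs_nonneg _) (by positivity)
          _ ≤ 2 := by linarith [hdb q.1, hQb q.1]
    rw [integral_add j1 j2, integral_prod_mul (fun s => c s - P s) P,
      integral_prod_mul (fun s => d s - Q s) Q,
      integral_sub hcint (cont_integrable hμ hPc),
      integral_sub hdint (cont_integrable hμ hQc)]
  -- symmetrization
  set σ : (ℝ × ℝ) × ℝ → (ℝ × ℝ) × ℝ := fun p => ((p.1.2, p.1.1), p.2) with hσ
  have hσmeas : Measurable σ :=
    ((measurable_snd.comp measurable_fst).prodMk
      (measurable_fst.comp measurable_fst)).prodMk measurable_snd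
  have hmap : Measure.map σ M = M := by
    rw [hM]
    have e : σ = Prod.map Prod.swap id := rfl
    rw [e, ← Measure.map_prod_map _ _ measurable_swap measurable_id,
      Measure.prod_swap, Measure.map_id]
  have hσcont : Continuous σ :=
    ((continuous_snd.comp continuous_fst).prodMk
      (continuous_fst.comp continuous_fst)).prodMk continuous_snd
  have hKσint : Integrable (fun p => K (σ p)) M := by
    refine Integrable.mono' (integrable_const 4)
      (hKc.comp hσcont).aestronglyMeasurable ?_
    filter_upwards with p using hKb (σ p)
  have hswap : ∫ p, K p ∂M = ∫ p, K (σ p) ∂M := by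
    conv_lhs => rw [← hmap]
    rw [integral_map hσmeas.aemeasurable hKc.aestronglyMeasurable]
  -- positivity
  have hprodnull : (μ.prod μ) (Set.Icc (0:ℝ) 1 ×ˢ Set.Icc (0:ℝ) 1)ᶜ = 0 := by
    have := ae_mem_prod (μ := μ) (ν := μ) hμ hμ
    rw [MeasureTheory.ae_iff] at this
    have e : (Set.Icc (0:ℝ) 1 ×ˢ Set.Icc (0:ℝ) 1)ᶜ
        = {q : ℝ × ℝ | ¬(q.1 ∈ Set.Icc (0:ℝ) 1 ∧ q.2 ∈ Set.Icc (0:ℝ) 1)} := by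
      ext q; simp only [Set.mem_compl_iff, Set.mem_setOf_eq, Set.mem_prod]
    rw [e]
    exact this
  have hpos : 0 ≤ ∫ p, K p ∂M := by
    have h2 : 0 ≤ ∫ p, (K p + K (σ p)) ∂M := by
      apply integral_nonneg_of_ae
      filter_upwards [ae_mem_prod hprodnull hν] with p hp
      obtain ⟨hp1, hp2⟩ := hp
      have hs : p.1.1 ∈ Set.Icc (0:ℝ) 1 := hp1.1
      have hu : p.1.2 ∈ Set.Icc (0:ℝ) 1 := hp1.2
      have := hkey p.1.1 p.1.2 p.2 hs hu hp2
      simp only [hK, hσ]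
      show (0:ℝ) ≤ _
      convert this using 1
      ring
    rw [integral_add hKint hKσint] at h2
    linarith [h2, hswap]
  rw [hKval] at hpos
  nlinarith [hpos]

theorem stmt4 (μ ν ρ : Measure ℝ)
    [IsProbabilityMeasure μ] [IsProbabilityMeasure ν] [IsProbabilityMeasure ρ]
    (hμ : μ (Set.Icc (0:ℝ) 1)ᶜ = 0) (hν : ν (Set.Icc (0:ℝ) 1)ᶜ = 0)
    (hρ : ρ (Set.Icc (0:ℝ) 1)ᶜ = 0)
    -- the moments of ρ are the products of the moments of μ and ν,
    -- i.e. ρ generates the Hadamard product f*g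
    (hmom : ∀ k : ℕ, (∫ t, t ^ k ∂ρ) = (∫ t, t ^ k ∂μ) * (∫ t, t ^ k ∂ν))
    (f fg : ℂ → ℂ)
    (hf : ∀ z : ℂ, f z = ∫ t, (1 - (t:ℂ) * z)⁻¹ ∂μ)
    (hfg : ∀ z : ℂ, fg z = ∫ t, (1 - (t:ℂ) * z)⁻¹ ∂ρ)
    (y : ℝ) (hy : 0 < y) :
    1 ≤ ((fg (y * Complex.I)) / (f (y * Complex.I))).re := by
  set P : ℝ → ℝ := fun x => 1/(1+(x*y)^2) with hP
  set Q : ℝ → ℝ := fun x => x*y/(1+(x*y)^2) with hQ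
  have hPc : Continuous P := by
    apply Continuous.div continuous_const (by continuity)
    intro x; positivity
  have hQc : Continuous Q := by
    apply Continuous.div (by continuity) (by continuity)
    intro x; positivity
  have hPb : ∀ x, |P x| ≤ 1 := by
    intro x
    have h0 : (0:ℝ) < 1 + (x*y)^2 := by positivity
    rw [hP]
    rw [abs_div, abs_of_pos h0, div_le_one h0]
    simp only [abs_one]
    nlinarith
  have hQb : ∀ x, |Q x| ≤ 1 := by
    intro x
    have h0 : (0:ℝ) < 1 + (x*y)^2 := by positivity
    rw [hQ]
    rw [abs_div, abs_of_pos h0, div_le_one h0]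
    nlinarith [_root_.sq_abs (x*y), abs_nonneg (x*y), sq_nonneg (|x*y| - 1)]
  set A := ∫ s, P s ∂μ with hA
  set B := ∫ s, Q s ∂μ with hB
  set C := ∫ s, ∫ t, P (s*t) ∂ν ∂μ with hC
  set D := ∫ s, ∫ t, Q (s*t) ∂ν ∂μ with hD
  -- representation of f
  have hfval : f ((y:ℂ) * Complex.I) = ((A:ℝ):ℂ) + ((B:ℝ):ℂ) * Complex.I := by
    rw [hf]
    exact repr_integral y hy μ hμ
  -- representation of fg, using the transfer lemma
  have hCval : (∫ x, P x ∂ρ) = C := transfer μ ν ρ hμ hν hρ hmom P hPc hPb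
  have hDval : (∫ x, Q x ∂ρ) = D := transfer μ ν ρ hμ hν hρ hmom Q hQc hQb
  have hfgval : fg ((y:ℂ) * Complex.I) = ((C:ℝ):ℂ) + ((D:ℝ):ℂ) * Complex.I := by
    rw [hfg, repr_integral y hy ρ hρ, hCval, hDval]
  -- positivity of A
  have hApos : 0 < A := by
    have hle : (1/(1+y^2) : ℝ) ≤ A := by
      have : ∫ (_ : ℝ), (1/(1+y^2) : ℝ) ∂μ = (1/(1+y^2) : ℝ) := by
        simp [measure_univ]
      rw [← this]
      apply integral_mono_ae (integrable_const _) (cont_integrable hμ hPc)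
      filter_upwards [ae_mem_Icc hμ] with s hs
      rw [hP]
      have h1 : (0:ℝ) < 1 + (s*y)^2 := by positivity
      have h2 : (0:ℝ) < 1 + y^2 := by positivity
      have hs2 : s^2 ≤ 1 := by nlinarith [hs.1, hs.2]
      have hsy : (s*y)^2 ≤ y^2 := by nlinarith [mul_le_mul_of_nonneg_right hs2 (sq_nonneg y)]
      rw [div_le_div_iff₀ h2 h1]
      nlinarith [hsy]
    have : (0:ℝ) < 1/(1+y^2) := by positivity
    linarith
  -- the key inequality
  have hkeyint : A*A + B*B ≤ C*A + D*B := by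
    apply key_integral μ ν hμ hν P Q hPc hQc hPb hQb
    intro s u t hs hu ht
    have := key_pointwise y s u t hy hs hu ht
    rw [hP, hQ]
    have e1 : (s*t)*y = s*t*y := by ring
    have e2 : (u*t)*y = u*t*y := by ring
    simp only [e1, e2]
    linarith [this]
  -- finish
  rw [hfval, hfgval]
  have hnormSq : Complex.normSq (((A:ℝ):ℂ) + ((B:ℝ):ℂ) * Complex.I) = A^2 + B^2 :=
    Complex.normSq_add_mul_I A B
  have hden : (0:ℝ) < A^2 + B^2 := by positivity
  rw [Complex.div_re, hnormSq]
  have hre : (((C:ℝ):ℂ) + ((D:ℝ):ℂ) * Complex.I).re = C := by simp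
  have him : (((C:ℝ):ℂ) + ((D:ℝ):ℂ) * Complex.I).im = D := by simp
  have hre2 : (((A:ℝ):ℂ) + ((B:ℝ):ℂ) * Complex.I).re = A := by simp
  have him2 : (((A:ℝ):ℂ) + ((B:ℝ):ℂ) * Complex.I).im = B := by simp
  rw [hre, him, hre2, him2, ← add_div, le_div_iff₀ hden, one_mul]
  nlinarith [hkeyint]
end

section
/- For 0 ≤ α ≤ β and y > 0, one has |Li_α(iy)| ≤ |Li_β(iy)|, where Li_α(z) = Σ_{k≥1} zᵏ/k^α is the polylogarithm. -/
open MeasureTheory Complex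

section Aux

open Real ProbabilityTheory

/-- Integrability from an a.e. bound. -/
lemma myInt' {X : Type*} [MeasurableSpace X] {E : Type*} [NormedAddCommGroup E]
    (μ : Measure X) [IsFiniteMeasure μ]
    (f : X → E) (hf : AEStronglyMeasurable f μ) (C : ℝ)
    (h : ∀ᵐ t ∂μ, ‖f t‖ ≤ C) : Integrable f μ :=
  (integrable_const C).mono' hf h

lemma myInt {E : Type*} [NormedAddCommGroup E] (μ : Measure ℝ) [IsFiniteMeasure μ]
    (f : ℝ → E) (hf : Continuous f) (C : ℝ)
    (h : ∀ᵐ t ∂μ, ‖f t‖ ≤ C) : Integrable f μ :=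
  myInt' μ f hf.aestronglyMeasurable C h

lemma aeIcc (μ : Measure ℝ) (hμ : μ (Set.Icc (0:ℝ) 1)ᶜ = 0) :
    ∀ᵐ t ∂μ, t ∈ Set.Icc (0:ℝ) 1 := by
  rw [MeasureTheory.ae_iff]
  exact hμ

lemma intPow (μ : Measure ℝ) [IsFiniteMeasure μ]
    (hc : ∀ᵐ t ∂μ, t ∈ Set.Icc (0:ℝ) 1) (k : ℕ) :
    Integrable (fun t : ℝ => t ^ k) μ := by
  apply myInt μ _ (continuous_pow k) 1
  filter_upwards [hc] with t ht
  rw [Real.norm_eq_abs, _root_.abs_of_nonneg (pow_nonneg ht.1 k)]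
  exact pow_le_one₀ ht.1 ht.2

lemma polyMom (μ : Measure ℝ) [IsFiniteMeasure μ]
    (hc : ∀ᵐ t ∂μ, t ∈ Set.Icc (0:ℝ) 1) (q : Polynomial ℝ) :
    ∫ t, q.eval t ∂μ
      = ∑ i ∈ Finset.range (q.natDegree + 1), q.coeff i * (∫ t, t^i ∂μ) := by
  have h : ∀ t : ℝ, q.eval t = ∑ i ∈ Finset.range (q.natDegree + 1), q.coeff i * t^i :=
    fun t => q.eval_eq_sum_range t
  simp_rw [h]
  rw [integral_finset_sum]
  · simp_rw [integral_const_mul]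
  · exact fun i _ => (intPow μ hc i).const_mul _

open unitInterval in
/-- A probability measure on `[0,1]` is determined by its moments, as far as integrals of
continuous functions are concerned (Weierstrass / Bernstein approximation). -/
lemma det (μ ν : Measure ℝ) [IsProbabilityMeasure μ] [IsProbabilityMeasure ν]
    (hμ : ∀ᵐ t ∂μ, t ∈ Set.Icc (0:ℝ) 1) (hν : ∀ᵐ t ∂ν, t ∈ Set.Icc (0:ℝ) 1)
    (hm : ∀ k : ℕ, (∫ t, t^k ∂μ) = ∫ t, t^k ∂ν)
    (f : ℝ → ℝ) (hf : Continuous f) :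
    ∫ t, f t ∂μ = ∫ t, f t ∂ν := by
  apply eq_of_forall_dist_le
  intro ε hε
  set F : C(I, ℝ) := ⟨fun x => f x, hf.comp continuous_subtype_val⟩ with hF
  have htendsto := bernsteinApproximation_uniform F
  rw [Metric.tendsto_atTop] at htendsto
  obtain ⟨n, hn⟩ := htendsto (ε/3) (by linarith)
  have hd := hn n le_rfl
  rw [dist_eq_norm] at hd
  set q : Polynomial ℝ :=
    ∑ k : Fin (n + 1), F (bernstein.z k) • bernsteinPolynomial ℝ n k with hq
  have hqev : ∀ x : I, q.eval (x:ℝ) = bernsteinApproximation n F x := by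
    intro x
    rw [hq, bernsteinApproximation]
    simp only [Polynomial.eval_finset_sum, Polynomial.eval_smul, smul_eq_mul,
      ContinuousMap.coe_sum, ContinuousMap.coe_smul, Finset.sum_apply, Pi.smul_apply,
      bernstein, Polynomial.toContinuousMapOn_apply, Polynomial.toContinuousMap_apply]
    simp [ContinuousMap.mul_apply, mul_comm]
  have hclose : ∀ x : ℝ, x ∈ Set.Icc (0:ℝ) 1 → |f x - q.eval x| ≤ ε/3 := by
    intro x hx
    have h1 : f x - q.eval x = (F - bernsteinApproximation n F) ⟨x, hx⟩ := by
      rw [hqev ⟨x, hx⟩]; simp [hF]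
    rw [h1]
    have h2 := ContinuousMap.norm_coe_le_norm (F - bernsteinApproximation n F) ⟨x, hx⟩
    rw [Real.norm_eq_abs] at h2
    refine h2.trans ?_
    rw [← norm_sub_rev]; linarith
  have hq_eq : ∫ t, q.eval t ∂μ = ∫ t, q.eval t ∂ν := by
    rw [polyMom μ hμ q, polyMom ν hν q]
    simp_rw [hm]
  have hintf : ∀ (ρ : Measure ℝ) [IsProbabilityMeasure ρ], (∀ᵐ t ∂ρ, t ∈ Set.Icc (0:ℝ) 1) →
      |(∫ t, f t ∂ρ) - ∫ t, q.eval t ∂ρ| ≤ ε/3 := by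
    intro ρ _ hρ
    obtain ⟨C, hC⟩ := (isCompact_Icc (a := (0:ℝ)) (b := 1)).exists_bound_of_continuousOn
      hf.continuousOn
    have hif : Integrable f ρ := myInt ρ f hf C <| by
      filter_upwards [hρ] with t ht; exact hC t ht
    have hiq : Integrable (fun t => q.eval t) ρ := by
      obtain ⟨C', hC'⟩ := (isCompact_Icc (a := (0:ℝ)) (b := 1)).exists_bound_of_continuousOn
        (q.continuous_aeval).continuousOn
      refine myInt ρ _ q.continuous_aeval C' ?_
      filter_upwards [hρ] with t ht
      simpa using hC' t ht
    rw [← integral_sub hif hiq]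
    have := norm_integral_le_of_norm_le_const (μ := ρ)
      (f := fun t => f t - q.eval t) (C := ε/3) ?_
    · simpa using this
    · filter_upwards [hρ] with t ht
      rw [Real.norm_eq_abs]
      exact hclose t ht
  have h1 := hintf μ hμ
  have h2 := hintf ν hν
  rw [Real.dist_eq]
  have hsplit : (∫ t, f t ∂μ) - ∫ t, f t ∂ν
      = ((∫ t, f t ∂μ) - ∫ t, q.eval t ∂μ) + ((∫ t, q.eval t ∂ν) - ∫ t, f t ∂ν) := by
    rw [hq_eq]; ring
  rw [hsplit]
  refine (abs_add_le _ _).trans ?_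
  have h2' : |(∫ t, q.eval t ∂ν) - ∫ t, f t ∂ν| ≤ ε/3 := by rw [abs_sub_comm]; exact h2
  linarith

lemma inv_bound (z : ℂ) (hz : z.re = 1) : ‖z⁻¹‖ ≤ 1 := by
  rw [norm_inv]
  have h : (1:ℝ) ≤ ‖z‖ := by
    calc (1:ℝ) = |z.re| := by rw [hz]; simp
    _ ≤ _ := Complex.abs_re_le_norm _
  rw [inv_le_one_iff₀]; right; exact h

lemma cont_sub (w : ℝ) : Continuous fun t : ℝ => ((1 : ℂ) - (t:ℂ) * (w * I))⁻¹ := by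
  apply Continuous.inv₀ (by continuity)
  intro t h
  have := congrArg Complex.re h
  simp at this

lemma cont_add (w : ℝ) : Continuous fun t : ℝ => ((1 : ℂ) + (t:ℂ) * (w * I))⁻¹ := by
  apply Continuous.inv₀ (by continuity)
  intro t h
  have := congrArg Complex.re h
  simp at this

lemma ae_pair (μ ν : Measure ℝ) [SFinite μ] [SFinite ν]
    (hμ : ∀ᵐ t ∂μ, t ∈ Set.Icc (0:ℝ) 1) (hν : ∀ᵐ t ∂ν, t ∈ Set.Icc (0:ℝ) 1) :
    ∀ᵐ z ∂(μ.prod ν), z.1 ∈ Set.Icc (0:ℝ) 1 ∧ z.2 ∈ Set.Icc (0:ℝ) 1 := by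
  have h1 : ∀ᵐ z ∂(μ.prod ν), z.1 ∈ Set.Icc (0:ℝ) 1 := by
    rw [MeasureTheory.ae_iff] at hμ ⊢
    have h : {z : ℝ × ℝ | ¬ z.1 ∈ Set.Icc (0:ℝ) 1} = {t | ¬ t ∈ Set.Icc (0:ℝ) 1} ×ˢ Set.univ := by
      ext z; simp
    rw [h, Measure.prod_prod, hμ, zero_mul]
  have h2 : ∀ᵐ z ∂(μ.prod ν), z.2 ∈ Set.Icc (0:ℝ) 1 := by
    rw [MeasureTheory.ae_iff] at hν ⊢
    have h : {z : ℝ × ℝ | ¬ z.2 ∈ Set.Icc (0:ℝ) 1} = Set.univ ×ˢ {t | ¬ t ∈ Set.Icc (0:ℝ) 1} := by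
      ext z; simp
    rw [h, Measure.prod_prod, hν, mul_zero]
  exact h1.and h2

lemma pt (s t x y : ℝ) (hs : 0 ≤ s) (ht : 0 ≤ t) (hx : 0 ≤ x) (hxy : x ≤ y) :
    (1+(s*y)*(t*y))/((1+(s*y)^2)*(1+(t*y)^2)) + (1+(t*y)*(s*y))/((1+(t*y)^2)*(1+(s*y)^2))
    ≤ (1+(s*x)*(t*y))/((1+(s*x)^2)*(1+(t*y)^2)) + (1+(t*x)*(s*y))/((1+(t*x)^2)*(1+(s*y)^2)) := by
  have hy : 0 ≤ y := hx.trans hxy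
  have d1 : (0:ℝ) < 1+(s*x)^2 := by positivity
  have d2 : (0:ℝ) < 1+(t*y)^2 := by positivity
  have d3 : (0:ℝ) < 1+(t*x)^2 := by positivity
  have d4 : (0:ℝ) < 1+(s*y)^2 := by positivity
  have hE : 0 ≤ (1+s*t*x*y)*((1+(t*x)^2)*(1+(s*y)^2) + (1+(s*x)^2)*(1+(t*y)^2))
      - 2*(1+s*t*y^2)*((1+(s*x)^2)*(1+(t*x)^2)) := by
    have h : (1+s*t*x*y)*((1+(t*x)^2)*(1+(s*y)^2) + (1+(s*x)^2)*(1+(t*y)^2))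
      - 2*(1+s*t*y^2)*((1+(s*x)^2)*(1+(t*x)^2))
      = (y-x)*(x*(s^2+t^2) + y*(s-t)^2 + s*t*x*y*(y-x)*(s^2+t^2)
          + 2*s^2*t^2*x^2*(x+y) + 2*s^3*t^3*x^3*y^2) := by ring
    rw [h]
    have : 0 ≤ y - x := by linarith
    positivity
  have lhs_eq : (1+(s*y)*(t*y))/((1+(s*y)^2)*(1+(t*y)^2)) + (1+(t*y)*(s*y))/((1+(t*y)^2)*(1+(s*y)^2))
      = 2*(1+s*t*y^2)/((1+(s*y)^2)*(1+(t*y)^2)) := by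
    rw [div_add_div _ _ (by positivity) (by positivity)]
    rw [div_eq_div_iff (by positivity) (by positivity)]
    ring
  rw [lhs_eq, div_add_div _ _ (by positivity) (by positivity),
    div_le_div_iff₀ (by positivity) (by positivity)]
  nlinarith [mul_nonneg hE (mul_pos d4 d2).le, mul_pos (mul_pos d1 d2) (mul_pos d3 d4)]

lemma conj_int (μ : Measure ℝ) (y : ℝ) :
    (starRingEnd ℂ) (∫ t, ((1:ℂ) - (t:ℂ)*(y*I))⁻¹ ∂μ) = ∫ t, ((1:ℂ) + (t:ℂ)*(y*I))⁻¹ ∂μ := by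
  rw [← integral_conj]
  congr 1
  funext t
  rw [map_inv₀]
  congr 1
  simp [map_sub, map_mul, Complex.conj_I]

lemma re_prod_eq (s x t y : ℝ) :
    (((1:ℂ) - (s:ℂ)*(x*I))⁻¹ * ((1:ℂ) + (t:ℂ)*(y*I))⁻¹).re
      = (1+(s*x)*(t*y))/((1+(s*x)^2)*(1+(t*y)^2)) := by
  have h1 : ((1:ℂ) - (s:ℂ)*(x*I))⁻¹ * ((1:ℂ) + (t:ℂ)*(y*I))⁻¹
      = (((1:ℂ) - ((s*x:ℝ):ℂ)*I) * ((1:ℂ) + ((t*y:ℝ):ℂ)*I))⁻¹ := by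
    rw [mul_inv]
    push_cast
    ring_nf
  rw [h1]
  rw [Complex.inv_re]
  have h2 : (((1:ℂ) - ((s*x:ℝ):ℂ)*I) * ((1:ℂ) + ((t*y:ℝ):ℂ)*I)).re = 1 + (s*x)*(t*y) := by simp
  have h3 : (((1:ℂ) - ((s*x:ℝ):ℂ)*I) * ((1:ℂ) + ((t*y:ℝ):ℂ)*I)).im = t*y - s*x := by
    simp; ring
  rw [Complex.normSq_apply, h2, h3]
  have h4 : (1+(s*x)*(t*y))^2 + (t*y-s*x)^2 = (1+(s*x)^2)*(1+(t*y)^2) := by ring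
  rw [← h4]
  ring_nf

lemma key (μ : Measure ℝ) [IsProbabilityMeasure μ] (hμ : ∀ᵐ t ∂μ, t ∈ Set.Icc (0:ℝ) 1)
    (x y : ℝ) (hx : 0 ≤ x) (hxy : x ≤ y) :
    ((∫ t, ((1:ℂ) - (t:ℂ)*(y*I))⁻¹ ∂μ) * (starRingEnd ℂ) (∫ t, ((1:ℂ) - (t:ℂ)*(y*I))⁻¹ ∂μ)).re
    ≤ ((∫ t, ((1:ℂ) - (t:ℂ)*(x*I))⁻¹ ∂μ) * (starRingEnd ℂ) (∫ t, ((1:ℂ) - (t:ℂ)*(y*I))⁻¹ ∂μ)).re := by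
  set P := μ.prod μ with hP
  have hΦcont : ∀ w : ℝ, Continuous (fun z : ℝ × ℝ =>
      ((1:ℂ) - (z.1:ℂ)*(w*I))⁻¹ * ((1:ℂ) + (z.2:ℂ)*(y*I))⁻¹) := fun w =>
    ((cont_sub w).comp continuous_fst).mul ((cont_add y).comp continuous_snd)
  have hΦbd : ∀ (w : ℝ) (z : ℝ × ℝ),
      ‖((1:ℂ) - (z.1:ℂ)*(w*I))⁻¹ * ((1:ℂ) + (z.2:ℂ)*(y*I))⁻¹‖ ≤ 1 := by
    intro w z
    rw [norm_mul]
    exact mul_le_one₀ (inv_bound _ (by simp)) (norm_nonneg _) (inv_bound _ (by simp))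
  have hΦint : ∀ w : ℝ, Integrable (fun z : ℝ × ℝ =>
      ((1:ℂ) - (z.1:ℂ)*(w*I))⁻¹ * ((1:ℂ) + (z.2:ℂ)*(y*I))⁻¹) P := fun w =>
    myInt' P _ (hΦcont w).aestronglyMeasurable 1 (ae_of_all _ (hΦbd w))
  have hprod : ∀ w : ℝ,
      (∫ t, ((1:ℂ) - (t:ℂ)*(w*I))⁻¹ ∂μ) * (starRingEnd ℂ) (∫ t, ((1:ℂ) - (t:ℂ)*(y*I))⁻¹ ∂μ)
        = ∫ z, ((1:ℂ) - (z.1:ℂ)*(w*I))⁻¹ * ((1:ℂ) + (z.2:ℂ)*(y*I))⁻¹ ∂P := by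
    intro w
    rw [conj_int, ← integral_prod_mul]
  have hre : ∀ w : ℝ,
      (∫ z, ((1:ℂ) - (z.1:ℂ)*(w*I))⁻¹ * ((1:ℂ) + (z.2:ℂ)*(y*I))⁻¹ ∂P).re
        = ∫ z, (((1:ℂ) - (z.1:ℂ)*(w*I))⁻¹ * ((1:ℂ) + (z.2:ℂ)*(y*I))⁻¹).re ∂P := by
    intro w
    have := integral_re (hΦint w)
    simpa using this.symm
  set ψ : ℝ → ℝ × ℝ → ℝ := fun w z =>
    (((1:ℂ) - (z.1:ℂ)*(w*I))⁻¹ * ((1:ℂ) + (z.2:ℂ)*(y*I))⁻¹).re with hψ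
  have hψcont : ∀ w, Continuous (ψ w) := fun w => Complex.continuous_re.comp (hΦcont w)
  have hψbd : ∀ w z, ‖ψ w z‖ ≤ 1 := by
    intro w z
    rw [hψ, Real.norm_eq_abs]
    exact (Complex.abs_re_le_norm _).trans (hΦbd w z)
  have hψint : ∀ w, Integrable (ψ w) P := fun w =>
    myInt' P _ (hψcont w).aestronglyMeasurable 1 (ae_of_all _ (hψbd w))
  have hψ'int : ∀ w, Integrable (fun z : ℝ × ℝ => ψ w (z.2, z.1)) P := by
    intro w
    refine myInt' P _ ?_ 1 (ae_of_all _ fun z => hψbd w _)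
    exact ((hψcont w).comp (continuous_snd.prodMk continuous_fst)).aestronglyMeasurable
  have hswap : ∀ w, ∫ z, ψ w z ∂P = ∫ z, ψ w (z.2, z.1) ∂P := by
    intro w
    have h1 : P = Measure.map Prod.swap P := by
      rw [hP, Measure.prod_swap]
    conv_lhs => rw [h1]
    rw [integral_map measurable_swap.aemeasurable (hψcont w).aestronglyMeasurable]
    rfl
  have hmono : ∫ z, (ψ y z + ψ y (z.2, z.1)) ∂P ≤ ∫ z, (ψ x z + ψ x (z.2, z.1)) ∂P := by
    apply integral_mono_ae ((hψint y).add (hψ'int y)) ((hψint x).add (hψ'int x))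
    filter_upwards [ae_pair μ μ hμ hμ] with z hz
    obtain ⟨⟨hs0, _⟩, ⟨ht0, _⟩⟩ := hz
    simp only [hψ, re_prod_eq]
    exact pt z.1 z.2 x y hs0 ht0 hx hxy
  rw [integral_add (hψint y) (hψ'int y), integral_add (hψint x) (hψ'int x),
    ← hswap x, ← hswap y] at hmono
  have hy_le : ∫ z, ψ y z ∂P ≤ ∫ z, ψ x z ∂P := by linarith
  rw [hprod y, hprod x, hre y, hre x]
  exact hy_le

lemma nu_exists (γ : ℝ) (hγ : 0 ≤ γ) : ∃ ν : Measure ℝ, IsProbabilityMeasure ν ∧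
    (∀ᵐ u ∂ν, u ∈ Set.Icc (0:ℝ) 1) ∧ ∀ k : ℕ, (∫ u, u^k ∂ν) = 1/((k:ℝ)+1)^γ := by
  rcases eq_or_lt_of_le hγ with rfl | hγpos
  · refine ⟨Measure.dirac 1, inferInstance, ?_, ?_⟩
    · exact (ae_dirac_iff (p := fun u => u ∈ Set.Icc (0:ℝ) 1) measurableSet_Icc).mpr
        (by norm_num)
    · intro k
      rw [integral_dirac]
      simp
  · haveI hPg : IsProbabilityMeasure (gammaMeasure γ 1) := isProbabilityMeasure_gammaMeasure hγpos one_pos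
    have hexp : Measurable fun x : ℝ => Real.exp (-x) := (measurable_id.neg).exp
    have haeg : ∀ᵐ x ∂(gammaMeasure γ 1), 0 ≤ x := by
      rw [MeasureTheory.ae_iff]
      have hset : {x : ℝ | ¬ 0 ≤ x} = Set.Iio 0 := by ext x; simp
      rw [hset, gammaMeasure, withDensity_apply _ measurableSet_Iio]
      exact lintegral_gammaPDF_of_nonpos le_rfl
    refine ⟨Measure.map (fun x => Real.exp (-x)) (gammaMeasure γ 1),
      Measure.isProbabilityMeasure_map hexp.aemeasurable, ?_, ?_⟩
    · refine (MeasureTheory.ae_map_iff (p := fun u => u ∈ Set.Icc (0:ℝ) 1)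
        hexp.aemeasurable measurableSet_Icc).mpr ?_
      filter_upwards [haeg] with x hx
      simp only [Set.mem_Icc]
      constructor
      · exact (Real.exp_pos _).le
      · calc Real.exp (-x) ≤ Real.exp 0 := Real.exp_le_exp.mpr (by linarith)
          _ = 1 := Real.exp_zero
    · intro k
      rw [integral_map hexp.aemeasurable ((continuous_pow k).aestronglyMeasurable)]
      have hmeas_eq : gammaMeasure γ 1
          = volume.withDensity (fun x => ((gammaPDFReal γ 1 x).toNNReal : ENNReal)) := rfl
      rw [hmeas_eq,
        integral_withDensity_eq_integral_smul₀
          ((measurable_gammaPDFReal γ 1).real_toNNReal).aemeasurable]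
      have hcongr : (fun x => (gammaPDFReal γ 1 x).toNNReal • Real.exp (-x) ^ k)
          = fun x => gammaPDFReal γ 1 x * Real.exp (-x) ^ k := by
        funext x
        rw [NNReal.smul_def, Real.coe_toNNReal _ (gammaPDFReal_nonneg hγpos one_pos x),
          smul_eq_mul]
      rw [hcongr]
      rw [← setIntegral_eq_integral_of_forall_compl_eq_zero
        (s := Set.Ici (0:ℝ)) (fun x hx => by
          rw [gammaPDFReal, if_neg (by simpa using hx), zero_mul])]
      rw [MeasureTheory.integral_Ici_eq_integral_Ioi]
      have hcg : ∀ x ∈ Set.Ioi (0:ℝ), gammaPDFReal γ 1 x * Real.exp (-x) ^ k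
          = (1/Real.Gamma γ) * (x ^ (γ-1) * Real.exp (-((((k:ℝ)+1)) * x))) := by
        intro x hx
        rw [gammaPDFReal, if_pos (le_of_lt hx)]
        have he : Real.exp (-(1*x)) * Real.exp (-x) ^ k = Real.exp (-(((k:ℝ)+1) * x)) := by
          rw [← Real.exp_nat_mul, ← Real.exp_add]
          ring_nf
        rw [Real.one_rpow]
        calc 1 / Real.Gamma γ * x ^ (γ-1) * Real.exp (-(1*x)) * Real.exp (-x) ^ k
            = 1 / Real.Gamma γ * x ^ (γ-1) * (Real.exp (-(1*x)) * Real.exp (-x) ^ k) := by ring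
          _ = _ := by rw [he]; ring
      rw [setIntegral_congr_fun measurableSet_Ioi hcg, integral_const_mul,
        integral_rpow_mul_exp_neg_mul_Ioi hγpos (by positivity)]
      have hΓ : Real.Gamma γ ≠ 0 := (Real.Gamma_pos_of_pos hγpos).ne'
      rw [div_rpow (by norm_num) (by positivity), Real.one_rpow]
      field_simp

end Aux

theorem stmt6 (α β : ℝ) (hα : 0 ≤ α) (hαβ : α ≤ β)
    (μα μβ : Measure ℝ) [IsProbabilityMeasure μα] [IsProbabilityMeasure μβ]
    (hμα : μα (Set.Icc (0:ℝ) 1)ᶜ = 0) (hμβ : μβ (Set.Icc (0:ℝ) 1)ᶜ = 0)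
    -- the moments of μα are 1/(k+1)^α, so z * ∫ (1-tz)⁻¹ dμα is the
    -- analytic continuation of Li_α to the slit plane; similarly for β
    (hmα : ∀ k : ℕ, (∫ t, t ^ k ∂μα) = 1 / ((k : ℝ) + 1) ^ α)
    (hmβ : ∀ k : ℕ, (∫ t, t ^ k ∂μβ) = 1 / ((k : ℝ) + 1) ^ β)
    (Liα Liβ : ℂ → ℂ)
    (hLiα : ∀ z : ℂ, Liα z = z * ∫ t, (1 - (t:ℂ) * z)⁻¹ ∂μα)
    (hLiβ : ∀ z : ℂ, Liβ z = z * ∫ t, (1 - (t:ℂ) * z)⁻¹ ∂μβ)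
    (y : ℝ) (hy : 0 < y) :
    ‖Liα (y * Complex.I)‖ ≤ ‖Liβ (y * Complex.I)‖ := by
  have aeα := aeIcc μα hμα
  have aeβ := aeIcc μβ hμβ
  obtain ⟨ν, hνP, hνae, hνm⟩ := nu_exists (β - α) (by linarith)
  haveI := hνP
  set Hα : ℂ := ∫ t, ((1:ℂ) - (t:ℂ)*(y*I))⁻¹ ∂μα with hHα
  set Hβ : ℂ := ∫ t, ((1:ℂ) - (t:ℂ)*(y*I))⁻¹ ∂μβ with hHβ
  set c : ℂ := (starRingEnd ℂ) Hα with hc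
  -- the pushforward measure with the same moments as μβ
  have hmul : Measurable fun z : ℝ × ℝ => z.1 * z.2 := measurable_fst.mul measurable_snd
  set μ' : Measure ℝ := Measure.map (fun z : ℝ × ℝ => z.1 * z.2) (μα.prod ν) with hμ'
  haveI : IsProbabilityMeasure μ' := Measure.isProbabilityMeasure_map hmul.aemeasurable
  have hpair := ae_pair μα ν aeα hνae
  have hμ'ae : ∀ᵐ t ∂μ', t ∈ Set.Icc (0:ℝ) 1 := by
    rw [hμ']
    refine (MeasureTheory.ae_map_iff (p := fun u => u ∈ Set.Icc (0:ℝ) 1)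
      hmul.aemeasurable measurableSet_Icc).mpr ?_
    filter_upwards [hpair] with z hz
    simp only [Set.mem_Icc]
    obtain ⟨⟨h10, h11⟩, ⟨h20, h21⟩⟩ := hz
    exact ⟨mul_nonneg h10 h20, mul_le_one₀ h11 h20 h21⟩
  have hμ'm : ∀ k : ℕ, (∫ t, t^k ∂μβ) = ∫ t, t^k ∂μ' := by
    intro k
    rw [hμ', integral_map hmul.aemeasurable ((continuous_pow k).aestronglyMeasurable)]
    have hsplit : (fun z : ℝ × ℝ => (z.1 * z.2)^k) = fun z : ℝ × ℝ => z.1^k * z.2^k := by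
      funext z; rw [mul_pow]
    rw [hsplit, integral_prod_mul (f := fun s : ℝ => s^k) (g := fun u : ℝ => u^k),
      hmα, hνm k, hmβ]
    have hk : (0:ℝ) < (k:ℝ) + 1 := by positivity
    rw [div_mul_div_comm, one_mul, ← Real.rpow_add hk]
    ring_nf
  -- G, the real part against conj Hα
  set G : ℝ → ℝ := fun s => ((((1:ℂ) - (s:ℂ)*(y*I))⁻¹) * c).re with hG
  have hGcont : Continuous G := Complex.continuous_re.comp ((cont_sub y).mul continuous_const)
  have hinv_bd : ∀ (s w : ℝ), ‖((1:ℂ) - (s:ℂ)*(w*I))⁻¹‖ ≤ 1 := fun s w =>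
    inv_bound _ (by simp)
  have hGbd : ∀ s, ‖G s‖ ≤ ‖c‖ := by
    intro s
    rw [hG, Real.norm_eq_abs]
    refine (Complex.abs_re_le_norm _).trans ?_
    rw [norm_mul]
    calc ‖((1:ℂ) - (s:ℂ)*(y*I))⁻¹‖ * ‖c‖ ≤ 1 * ‖c‖ :=
        mul_le_mul_of_nonneg_right (hinv_bd s y) (norm_nonneg _)
      _ = ‖c‖ := one_mul _
  -- ∫ G dμβ = (Hβ * c).re
  have hintβ : Integrable (fun s : ℝ => ((1:ℂ) - (s:ℂ)*(y*I))⁻¹ * c) μβ :=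
    myInt μβ _ ((cont_sub y).mul continuous_const) ‖c‖
      (ae_of_all _ fun s => by
        rw [norm_mul]
        calc ‖((1:ℂ) - (s:ℂ)*(y*I))⁻¹‖ * ‖c‖ ≤ 1 * ‖c‖ :=
            mul_le_mul_of_nonneg_right (hinv_bd s y) (norm_nonneg _)
          _ = ‖c‖ := one_mul _)
  have hGβ : ∫ s, G s ∂μβ = (Hβ * c).re := by
    rw [hG]
    have h1 := integral_re hintβ
    simp only [RCLike.re_to_complex] at h1 ⊢
    rw [h1, integral_mul_const, ← hHβ]
  -- determinacy: ∫ G dμβ = ∫ G dμ'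
  have hdet : ∫ s, G s ∂μβ = ∫ s, G s ∂μ' := det μβ μ' aeβ hμ'ae hμ'm G hGcont
  -- Fubini on μ'
  have hGmap : ∫ s, G s ∂μ' = ∫ z, G (z.1 * z.2) ∂(μα.prod ν) := by
    rw [hμ', integral_map hmul.aemeasurable hGcont.aestronglyMeasurable]
  have hGz_int : Integrable (fun z : ℝ × ℝ => G (z.1 * z.2)) (μα.prod ν) :=
    myInt' _ _ (hGcont.comp (continuous_fst.mul continuous_snd)).aestronglyMeasurable ‖c‖
      (ae_of_all _ fun z => hGbd _)
  have hfub : ∫ z, G (z.1 * z.2) ∂(μα.prod ν) = ∫ s, ∫ u, G (s*u) ∂ν ∂μα :=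
    integral_prod _ hGz_int
  have hswap2 : ∫ s, ∫ u, G (s*u) ∂ν ∂μα = ∫ u, ∫ s, G (s*u) ∂μα ∂ν :=
    integral_integral_swap hGz_int
  -- pointwise (in u) lower bound from the key lemma
  have hlow : ∀ᵐ u ∂ν, Complex.normSq Hα ≤ ∫ s, G (s*u) ∂μα := by
    filter_upwards [hνae] with u hu
    obtain ⟨hu0, hu1⟩ := hu
    have hfun : (fun s : ℝ => G (s*u))
        = fun s : ℝ => ((((1:ℂ) - (s:ℂ)*(((u*y : ℝ):ℂ)*I))⁻¹) * c).re := by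
      funext s
      simp only [hG]
      have hcast : ((s*u : ℝ):ℂ) * ((y:ℂ) * I) = (s:ℂ) * (((u*y : ℝ):ℂ) * I) := by
        push_cast; ring
      rw [hcast]
    have hint' : Integrable (fun s : ℝ => ((1:ℂ) - (s:ℂ)*(((u*y : ℝ):ℂ)*I))⁻¹ * c) μα :=
      myInt μα _ ((cont_sub (u*y)).mul continuous_const) ‖c‖
        (ae_of_all _ fun s => by
          rw [norm_mul]
          calc ‖((1:ℂ) - (s:ℂ)*(((u*y:ℝ):ℂ)*I))⁻¹‖ * ‖c‖ ≤ 1 * ‖c‖ :=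
              mul_le_mul_of_nonneg_right (hinv_bd s (u*y)) (norm_nonneg _)
            _ = ‖c‖ := one_mul _)
    have hinner : ∫ s, G (s*u) ∂μα
        = ((∫ s, ((1:ℂ) - (s:ℂ)*(((u*y : ℝ):ℂ)*I))⁻¹ ∂μα) * c).re := by
      rw [hfun]
      have h1 := integral_re hint'
      simp only [RCLike.re_to_complex] at h1 ⊢
      rw [h1, integral_mul_const]
    have hkey := key μα aeα (u*y) y (mul_nonneg hu0 hy.le)
      (by nlinarith)
    have hns : Complex.normSq Hα = ((∫ t, ((1:ℂ) - (t:ℂ)*((y:ℂ)*I))⁻¹ ∂μα) *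
        (starRingEnd ℂ) (∫ t, ((1:ℂ) - (t:ℂ)*((y:ℂ)*I))⁻¹ ∂μα)).re := by
      rw [← hHα, ← hc, Complex.mul_conj, Complex.ofReal_re]
    rw [hinner, hns, hc, hHα]
    exact hkey
  have hν_int_inner : Integrable (fun u => ∫ s, G (s*u) ∂μα) ν :=
    hGz_int.integral_prod_right
  have hlow2 : Complex.normSq Hα ≤ ∫ u, ∫ s, G (s*u) ∂μα ∂ν := by
    have h0 : Complex.normSq Hα = ∫ _u, Complex.normSq Hα ∂ν := by
      rw [integral_const]
      simp
    rw [h0]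
    exact integral_mono_ae (integrable_const _) hν_int_inner hlow
  have hchain : Complex.normSq Hα ≤ (Hβ * c).re := by
    calc Complex.normSq Hα ≤ ∫ u, ∫ s, G (s*u) ∂μα ∂ν := hlow2
      _ = ∫ s, ∫ u, G (s*u) ∂ν ∂μα := hswap2.symm
      _ = ∫ z, G (z.1 * z.2) ∂(μα.prod ν) := hfub.symm
      _ = ∫ s, G s ∂μ' := hGmap.symm
      _ = ∫ s, G s ∂μβ := hdet.symm
      _ = (Hβ * c).re := hGβ
  -- conclude |Hα| ≤ |Hβ|
  have habs : ‖Hα‖ ≤ ‖Hβ‖ := by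
    have h1 : (Hβ * c).re ≤ ‖Hβ * c‖ := Complex.re_le_norm _
    have h2 : ‖Hβ * c‖ = ‖Hβ‖ * ‖Hα‖ := by
      rw [norm_mul, hc, Complex.norm_conj]
    have h3 : Complex.normSq Hα = ‖Hα‖ ^ 2 := (Complex.sq_norm Hα).symm
    have hA := norm_nonneg Hα
    have hB := norm_nonneg Hβ
    nlinarith [hchain, h1, h2, h3]
  rw [hLiα, hLiβ]
  simp only [norm_mul]
  gcongr
end

section
/- For 0 < τ ≤ 1 and y > 0, the function v(t) = (1 - t - iyt)/(1 - t - iτyt) has Re v(t) increasing for t ∈ [0,1]; in particular Re v(t) ≥ Re v(0) = 1 for all t ∈ [0,1]. -/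
open Complex

theorem stmt11 (y τ : ℝ) (hy : 0 < y) (hτ0 : 0 < τ) (hτ1 : τ ≤ 1)
    (v : ℝ → ℂ)
    (hv : ∀ t : ℝ, v t = (1 - (t:ℂ) - Complex.I * y * t) / (1 - (t:ℂ) - Complex.I * τ * y * t)) :
    MonotoneOn (fun t : ℝ => (v t).re) (Set.Icc 0 1) ∧
    (v 0).re = 1 ∧
    ∀ t ∈ Set.Icc (0:ℝ) 1, 1 ≤ (v t).re := by
  have hD : ∀ t : ℝ, 0 < (1-t)^2 + τ^2*y^2*t^2 := by
    intro t
    rcases eq_or_ne t 0 with h | h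
    · simp [h]
    · have : 0 < τ^2*y^2*t^2 := by positivity
      nlinarith [sq_nonneg (1-t)]
  have hre : ∀ t : ℝ, (v t).re = ((1-t)^2 + τ*y^2*t^2)/((1-t)^2 + τ^2*y^2*t^2) := by
    intro t
    rw [hv, Complex.div_re, Complex.normSq_apply]
    simp
    ring_nf
  constructor
  · intro s hs t ht hst
    simp only [hre]
    rw [div_le_div_iff₀ (hD s) (hD t)]
    obtain ⟨hs0, hs1⟩ := hs
    obtain ⟨ht0, ht1⟩ := ht
    nlinarith [mul_nonneg (mul_nonneg (mul_nonneg hτ0.le (sub_nonneg.mpr hτ1)) (sq_nonneg y))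
      (mul_nonneg (sub_nonneg.mpr hst)
        (add_nonneg (mul_nonneg ht0 (sub_nonneg.mpr hs1)) (mul_nonneg hs0 (sub_nonneg.mpr ht1))))]
  constructor
  · rw [hre]; norm_num
  · intro t ht
    rw [hre, le_div_iff₀ (hD t)]
    obtain ⟨ht0, ht1⟩ := ht
    nlinarith [mul_nonneg (mul_nonneg hτ0.le (sub_nonneg.mpr hτ1)) (mul_nonneg (sq_nonneg y) (sq_nonneg t))]
end
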